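/- arXiv:1609.04052 — 14 statements merged into one kernel-verified Lean document; each statement's English description precedes it below -/
import Mathlib

section
/- Every direct summand of an A-C3 module is also an A-C3 module, where A is a class of right R-modules closed under isomorphisms. -/
universe u v

/-- A submodule is a direct summand if it has a complement. -/
def IsSummand {R : Type u} [Ring R] {M : Type v} [AddCommGroup M] [Module R M]
    (X : Submodule R M) : Prop :=
  ∃ Y : Submodule R M, IsCompl X Y

/-- A class of modules is closed under isomorphisms. -/
def ClosedUnderIso (R : Type u) [Ring R]
    (A : (N : Type v) → [AddCommGroup N] → [Module R N] → Prop) : Prop :=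
  ∀ (N₁ N₂ : Type v) [AddCommGroup N₁] [Module R N₁] [AddCommGroup N₂] [Module R N₂],
    (N₁ ≃ₗ[R] N₂) → A N₁ → A N₂

/-- A class of modules is closed under direct summands. -/
def ClosedUnderSummands (R : Type u) [Ring R]
    (A : (N : Type v) → [AddCommGroup N] → [Module R N] → Prop) : Prop :=
  ∀ (N : Type v) [AddCommGroup N] [Module R N] (X : Submodule R N),
    IsSummand X → A N → A X

/-- `M` is an `A`-C3 module. -/
def IsAC3 (R : Type u) [Ring R]
    (A : (N : Type v) → [AddCommGroup N] → [Module R N] → Prop)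
    (M : Type v) [AddCommGroup M] [Module R M] : Prop :=
  ∀ X Y : Submodule R M, A X → A Y → IsSummand X → IsSummand Y →
    X ⊓ Y = ⊥ → IsSummand (X ⊔ Y)

/-- `M` is an `A`-D3 module. -/
def IsAD3 (R : Type u) [Ring R]
    (A : (N : Type v) → [AddCommGroup N] → [Module R N] → Prop)
    (M : Type v) [AddCommGroup M] [Module R M] : Prop :=
  ∀ X Y : Submodule R M, IsSummand X → IsSummand Y →
    A (M ⧸ X) → A (M ⧸ Y) → X ⊔ Y = ⊤ → IsSummand (X ⊓ Y)

/-- `N` is `K`-injective: every map from a submodule of `K` to `N` extends to `K`. -/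
def IsInjectiveFor (R : Type u) [Ring R] (K : Type v) [AddCommGroup K] [Module R K]
    (N : Type v) [AddCommGroup N] [Module R N] : Prop :=
  ∀ (A : Submodule R K) (f : A →ₗ[R] N), ∃ g : K →ₗ[R] N, ∀ a : A, g a = f a

/-- `N` is `A`-injective: `N` is `K`-injective for every `K ∈ A`. -/
def IsAInjective (R : Type u) [Ring R]
    (A : (N : Type v) → [AddCommGroup N] → [Module R N] → Prop)
    (N : Type v) [AddCommGroup N] [Module R N] : Prop :=
  ∀ (K : Type v) [AddCommGroup K] [Module R K], A K → IsInjectiveFor R K N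

/-- `P` is `K`-projective: every map from `P` to a quotient of `K` lifts to `K`. -/
def IsProjectiveFor (R : Type u) [Ring R] (P : Type v) [AddCommGroup P] [Module R P]
    (K : Type v) [AddCommGroup K] [Module R K] : Prop :=
  ∀ (L : Type v) [AddCommGroup L] [Module R L] (g : K →ₗ[R] L) (f : P →ₗ[R] L),
    Function.Surjective g → ∃ h : P →ₗ[R] K, g ∘ₗ h = f

/-- `P` is `A`-projective: `P` is `K`-projective for every `K ∈ A`. -/
def IsAProjective (R : Type u) [Ring R]
    (A : (N : Type v) → [AddCommGroup N] → [Module R N] → Prop)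
    (P : Type v) [AddCommGroup P] [Module R P] : Prop :=
  ∀ (K : Type v) [AddCommGroup K] [Module R K], A K → IsProjectiveFor R P K

/-- An indecomposable module: nonzero, and its only direct summands are trivial. -/
def Indecomposable' (R : Type u) [Ring R] (M : Type v) [AddCommGroup M] [Module R M] : Prop :=
  Nontrivial M ∧ ∀ X : Submodule R M, IsSummand X → X = ⊥ ∨ X = ⊤

section Aux

variable {R : Type u} [Ring R] {M : Type v} [AddCommGroup M] [Module R M]

lemma summand_map_of_summand {N : Submodule R M} (hN : IsSummand N)
    {X : Submodule R N} (hX : IsSummand X) : IsSummand (X.map N.subtype) := by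
  obtain ⟨N', hN'⟩ := hN
  obtain ⟨X', hX'⟩ := hX
  refine ⟨X'.map N.subtype ⊔ N', ?_, ?_⟩
  · rw [disjoint_iff]
    apply le_antisymm _ bot_le
    rintro m ⟨hm1, hm2⟩
    obtain ⟨a, ha, n', hn', rfl⟩ := Submodule.mem_sup.mp hm2
    have haN : a ∈ N := by
      obtain ⟨x, _, rfl⟩ := ha; exact x.2
    have hmN : a + n' ∈ N := by
      obtain ⟨x, -, hx⟩ := hm1; rw [← hx]; exact x.2
    have hn'0 : n' = 0 := by
      have : n' ∈ N ⊓ N' := ⟨by simpa using N.sub_mem hmN haN, hn'⟩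
      simpa [disjoint_iff.mp hN'.1] using this
    subst hn'0
    rw [add_zero] at hm1 ⊢
    have : a ∈ (X ⊓ X').map N.subtype := by
      rw [Submodule.map_inf _ N.injective_subtype]
      exact ⟨hm1, ha⟩
    rwa [disjoint_iff.mp hX'.1, Submodule.map_bot] at this
  · rw [codisjoint_iff, ← sup_assoc, ← Submodule.map_sup, codisjoint_iff.mp hX'.2,
      Submodule.map_top, Submodule.range_subtype, codisjoint_iff.mp hN'.2]

lemma summand_comap_of_le {N S : Submodule R M} (hle : S ≤ N) (hS : IsSummand S) :
    IsSummand (S.comap N.subtype) := by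
  obtain ⟨T, hT⟩ := hS
  refine ⟨T.comap N.subtype, ?_, ?_⟩
  · rw [disjoint_iff, ← Submodule.comap_inf, disjoint_iff.mp hT.1, Submodule.comap_bot,
      LinearMap.ker_eq_bot.mpr N.injective_subtype]
  · rw [codisjoint_iff, eq_top_iff]
    rintro ⟨n, hn⟩ -
    have : n ∈ S ⊔ T := by rw [codisjoint_iff.mp hT.2]; trivial
    obtain ⟨s, hs, t, ht, hst⟩ := Submodule.mem_sup.mp this
    have hsN : s ∈ N := hle hs
    have htN : t ∈ N := by have := N.sub_mem hn hsN; rwa [← hst, add_sub_cancel_left] at this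
    refine Submodule.mem_sup.mpr ⟨⟨s, hsN⟩, hs, ⟨t, htN⟩, ht, ?_⟩
    exact Subtype.ext hst

end Aux

theorem summand_of_AC3 {R : Type u} [Ring R]
    (A : (N : Type v) → [AddCommGroup N] → [Module R N] → Prop)
    (hiso : ClosedUnderIso R A)
    (M : Type v) [AddCommGroup M] [Module R M]
    (hM : IsAC3 R A M) (N : Submodule R M) (hN : IsSummand N) :
    IsAC3 R A N := by
  intro X Y hAX hAY hX hY hXY
  have hX' := summand_map_of_summand hN hX
  have hY' := summand_map_of_summand hN hY
  have hinf : X.map N.subtype ⊓ Y.map N.subtype = ⊥ := by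
    rw [← Submodule.map_inf _ N.injective_subtype, hXY, Submodule.map_bot]
  have hsum := hM _ _ (hiso _ _ (N.equivSubtypeMap X) hAX)
    (hiso _ _ (N.equivSubtypeMap Y) hAY) hX' hY' hinf
  rw [← Submodule.map_sup] at hsum
  have := summand_comap_of_le (Submodule.map_subtype_le N (X ⊔ Y)) hsum
  rwa [Submodule.comap_map_eq_of_injective N.injective_subtype] at this
end

section
/- Every direct summand of an A-D3 module is also an A-D3 module, where A is a class of right R-modules closed under isomorphisms. -/
universe u v

section Aux
variable {R : Type u} [Ring R] {M : Type v} [AddCommGroup M] [Module R M]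

lemma aux_inf (p q : Submodule R M) (hpq : Disjoint p q) (X : Submodule R ↥p) :
    (X.map p.subtype ⊔ q) ⊓ p = X.map p.subtype := by
  rw [sup_inf_assoc_of_le _ (Submodule.map_subtype_le p X),
    disjoint_iff.mp hpq.symm, sup_bot_eq]

lemma aux_compl_up (p q : Submodule R M) (hpq : IsCompl p q) {X X' : Submodule R ↥p}
    (h : IsCompl X X') : IsCompl (X.map p.subtype ⊔ q) (X'.map p.subtype) := by
  constructor
  · rw [disjoint_iff]
    have h1 : p ⊓ X'.map p.subtype = X'.map p.subtype :=
      inf_eq_right.mpr (Submodule.map_subtype_le p X')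
    calc (X.map p.subtype ⊔ q) ⊓ X'.map p.subtype
        = ((X.map p.subtype ⊔ q) ⊓ p) ⊓ X'.map p.subtype := by rw [inf_assoc, h1]
      _ = X.map p.subtype ⊓ X'.map p.subtype := by rw [aux_inf p q hpq.disjoint]
      _ = (X ⊓ X').map p.subtype := (Submodule.map_inf _ (Submodule.injective_subtype p)).symm
      _ = ⊥ := by rw [disjoint_iff.mp h.disjoint, Submodule.map_bot]
  · rw [codisjoint_iff]
    calc (X.map p.subtype ⊔ q) ⊔ X'.map p.subtype
        = (X.map p.subtype ⊔ X'.map p.subtype) ⊔ q := by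
          rw [sup_assoc, sup_comm q, ← sup_assoc]
      _ = (X ⊔ X').map p.subtype ⊔ q := by rw [Submodule.map_sup]
      _ = ⊤ := by rw [codisjoint_iff.mp h.codisjoint, Submodule.map_subtype_top,
          codisjoint_iff.mp hpq.codisjoint]

lemma aux_compl_down (p : Submodule R M) {A B : Submodule R M} (hAB : IsCompl A B)
    (hA : A ≤ p) : IsCompl (A.comap p.subtype) ((B ⊓ p).comap p.subtype) := by
  constructor
  · rw [disjoint_iff, ← Submodule.comap_inf, ← inf_assoc,
      disjoint_iff.mp hAB.disjoint, bot_inf_eq, Submodule.comap_bot,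
      Submodule.ker_subtype]
  · rw [codisjoint_iff]
    apply Submodule.map_injective_of_injective (Submodule.injective_subtype p)
    rw [Submodule.map_sup, Submodule.map_comap_subtype, Submodule.map_comap_subtype,
      Submodule.map_top, Submodule.range_subtype, inf_eq_right.mpr hA,
      inf_comm p, inf_assoc, inf_idem, ← sup_inf_assoc_of_le _ hA,
      codisjoint_iff.mp hAB.codisjoint, top_inf_eq]

noncomputable def auxEquiv (p q : Submodule R M) (hpq : IsCompl p q) (X : Submodule R ↥p) :
    (↥p ⧸ X) ≃ₗ[R] (M ⧸ (X.map p.subtype ⊔ q)) := by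
  set Z := X.map p.subtype ⊔ q with hZ
  have hker : X ≤ LinearMap.ker (Z.mkQ ∘ₗ p.subtype) := by
    intro x hx
    simp only [LinearMap.mem_ker, LinearMap.comp_apply, Submodule.subtype_apply,
      Submodule.mkQ_apply, Submodule.Quotient.mk_eq_zero]
    exact Submodule.mem_sup_left (Submodule.mem_map_of_mem hx)
  refine LinearEquiv.ofBijective (X.liftQ (Z.mkQ ∘ₗ p.subtype) hker) ⟨?_, ?_⟩
  · rw [← LinearMap.ker_eq_bot]
    apply Submodule.ker_liftQ_eq_bot
    intro x hx
    simp only [LinearMap.mem_ker, LinearMap.comp_apply, Submodule.subtype_apply,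
      Submodule.mkQ_apply, Submodule.Quotient.mk_eq_zero] at hx
    have : (x : M) ∈ Z ⊓ p := ⟨hx, x.2⟩
    rw [aux_inf p q hpq.disjoint] at this
    obtain ⟨y, hy, hyx⟩ := this
    rwa [show y = x from Subtype.ext hyx] at hy
  · rw [← LinearMap.range_eq_top, Submodule.range_liftQ, LinearMap.range_comp,
      Submodule.range_subtype, Submodule.map_mkQ_eq_top]
    exact top_le_iff.mp (le_trans (le_of_eq (codisjoint_iff.mp hpq.codisjoint).symm)
      (sup_le le_sup_right (le_trans le_sup_right le_sup_left)))

end Aux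

theorem summand_of_AD3 {R : Type u} [Ring R]
    (A : (N : Type v) → [AddCommGroup N] → [Module R N] → Prop)
    (hiso : ClosedUnderIso R A)
    (M : Type v) [AddCommGroup M] [Module R M]
    (hM : IsAD3 R A M) (N : Submodule R M) (hN : IsSummand N) :
    IsAD3 R A N := by
  obtain ⟨N', hN'⟩ := hN
  intro X Y hX hY hAX hAY hXY
  obtain ⟨X', hX'⟩ := hX
  obtain ⟨Y', hY'⟩ := hY
  have hXc := aux_compl_up N N' hN' hX'
  have hYc := aux_compl_up N N' hN' hY'
  have hAX2 : A (M ⧸ (X.map N.subtype ⊔ N')) := hiso _ _ (auxEquiv N N' hN' X) hAX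
  have hAY2 : A (M ⧸ (Y.map N.subtype ⊔ N')) := hiso _ _ (auxEquiv N N' hN' Y) hAY
  have htop : (X.map N.subtype ⊔ N') ⊔ (Y.map N.subtype ⊔ N') = ⊤ := by
    rw [sup_sup_sup_comm, sup_idem, ← Submodule.map_sup, hXY, Submodule.map_subtype_top,
      codisjoint_iff.mp hN'.codisjoint]
  obtain ⟨C, hC⟩ := hM _ _ ⟨_, hXc⟩ ⟨_, hYc⟩ hAX2 hAY2 htop
  have h1 : (X.map N.subtype ⊔ N') ⊓ Y.map N.subtype = (X ⊓ Y).map N.subtype := by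
    have h2 : N ⊓ Y.map N.subtype = Y.map N.subtype :=
      inf_eq_right.mpr (Submodule.map_subtype_le N Y)
    calc (X.map N.subtype ⊔ N') ⊓ Y.map N.subtype
        = ((X.map N.subtype ⊔ N') ⊓ N) ⊓ Y.map N.subtype := by rw [inf_assoc, h2]
      _ = X.map N.subtype ⊓ Y.map N.subtype := by rw [aux_inf N N' hN'.disjoint]
      _ = (X ⊓ Y).map N.subtype := (Submodule.map_inf _ (Submodule.injective_subtype N)).symm
  have hint : (X.map N.subtype ⊔ N') ⊓ (Y.map N.subtype ⊔ N')
      = (X ⊓ Y).map N.subtype ⊔ N' := by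
    rw [← inf_sup_assoc_of_le _ (le_sup_right : N' ≤ X.map N.subtype ⊔ N'), h1]
  rw [hint] at hC
  set S := (X ⊓ Y).map N.subtype with hS
  have hSN : S ≤ N := Submodule.map_subtype_le N (X ⊓ Y)
  have hAC : IsCompl S (N' ⊔ C) := by
    constructor
    · rw [disjoint_iff]
      have e1 : (N' ⊔ C) ⊓ (S ⊔ N') = N' := by
        rw [sup_inf_assoc_of_le _ (le_sup_right : N' ≤ S ⊔ N'),
          disjoint_iff.mp hC.disjoint.symm, sup_bot_eq]
      have e2 : S ⊓ (N' ⊔ C) = S ⊓ N' := by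
        calc S ⊓ (N' ⊔ C) = (S ⊓ (S ⊔ N')) ⊓ (N' ⊔ C) := by
              rw [inf_eq_left.mpr (le_sup_left : S ≤ S ⊔ N')]
          _ = S ⊓ ((N' ⊔ C) ⊓ (S ⊔ N')) := by rw [inf_assoc, inf_comm (S ⊔ N')]
          _ = S ⊓ N' := by rw [e1]
      rw [e2]
      exact le_bot_iff.mp (le_trans (inf_le_inf_right N' hSN)
        (le_of_eq (disjoint_iff.mp hN'.disjoint)))
    · rw [codisjoint_iff, ← sup_assoc]
      exact codisjoint_iff.mp hC.codisjoint
  have hfinal := aux_compl_down N hAC hSN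
  rw [hS, Submodule.comap_map_eq, Submodule.ker_subtype, sup_bot_eq] at hfinal
  exact ⟨_, hfinal⟩
end

section
/- A module M is an A-C3 module if and only if: whenever A₁, B ∈ A are direct summands of M with A₁ ∩ B = 0, there exist submodules A₂ and B₂ of M with M = A₁ ⊕ B₂ = A₂ ⊕ B, A₁ ≤ A₂ and B ≤ B₂. -/
universe u v

theorem AC3_iff_compl_extension {R : Type u} [Ring R]
    (A : (N : Type v) → [AddCommGroup N] → [Module R N] → Prop)
    (hiso : ClosedUnderIso R A) (hsum : ClosedUnderSummands R A)
    (M : Type v) [AddCommGroup M] [Module R M] :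
    IsAC3 R A M ↔
      ∀ X Y : Submodule R M, A X → A Y → IsSummand X → IsSummand Y → X ⊓ Y = ⊥ →
        ∃ X₂ Y₂ : Submodule R M, IsCompl X Y₂ ∧ IsCompl X₂ Y ∧ X ≤ X₂ ∧ Y ≤ Y₂ := by
  constructor
  · intro h X Y hAX hAY hX hY hXY
    obtain ⟨C, hC⟩ := h X Y hAX hAY hX hY hXY
    have hd : Disjoint X Y := disjoint_iff.mpr hXY
    refine ⟨X ⊔ C, Y ⊔ C, hd.isCompl_sup_right_of_isCompl_sup_left hC, ?_, le_sup_left,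
      le_sup_left⟩
    have := hd.symm.isCompl_sup_right_of_isCompl_sup_left (by rwa [sup_comm] : IsCompl (Y ⊔ X) C)
    exact this.symm
  · intro h X Y hAX hAY hX hY hXY
    obtain ⟨X₂, Y₂, h1, h2, hXX, hYY⟩ := h X Y hAX hAY hX hY hXY
    refine ⟨X₂ ⊓ Y₂, ?_, ?_⟩
    · rw [disjoint_iff]
      have e1 : (X ⊔ Y) ⊓ Y₂ = Y := by
        rw [sup_comm, sup_inf_assoc_of_le X hYY, h1.disjoint.eq_bot, sup_bot_eq]
      apply le_antisymm ?_ bot_le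
      calc (X ⊔ Y) ⊓ (X₂ ⊓ Y₂) ≤ ((X ⊔ Y) ⊓ Y₂) ⊓ X₂ := by
            rw [inf_assoc, inf_comm X₂ Y₂]
          _ = Y ⊓ X₂ := by rw [e1]
          _ = ⊥ := by rw [inf_comm]; exact h2.disjoint.eq_bot
    · rw [codisjoint_iff]
      have e2 : X ⊔ (X₂ ⊓ Y₂) = X₂ := by
        rw [inf_comm, ← sup_inf_assoc_of_le Y₂ hXX, h1.sup_eq_top, top_inf_eq]
      rw [sup_comm X Y, sup_assoc, e2, sup_comm, h2.sup_eq_top]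
end

section
/- Let M be an A-D3 module with A a class of right R-modules closed under isomorphisms and direct summands. If M = M₁ ⊕ M₂ and f : M₁ → M₂ is a homomorphism with im(f) a direct summand of M₂ and im(f) ∈ A, then ker(f) is a direct summand of M₁. -/
universe u v

set_option maxHeartbeats 1000000 in
theorem aux_modular_compl {R : Type*} {M : Type*} [Ring R] [AddCommGroup M] [Module R M]
    (C D K' : Submodule R M) (hD : IsCompl (K' ⊔ C) D) (hK'C : K' ⊓ C = ⊥) :
    IsCompl K' (C ⊔ D) := by
  constructor
  · rw [disjoint_iff, eq_bot_iff]
    have step : (C ⊔ D) ⊓ (K' ⊔ C) = C := by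
      rw [sup_inf_assoc_of_le D (le_sup_right : C ≤ K' ⊔ C), hD.symm.inf_eq_bot, sup_bot_eq]
    calc K' ⊓ (C ⊔ D) ≤ K' ⊓ ((C ⊔ D) ⊓ (K' ⊔ C)) :=
          le_inf inf_le_left (le_inf inf_le_right (inf_le_left.trans le_sup_left))
      _ = K' ⊓ C := by rw [step]
      _ ≤ ⊥ := hK'C.le
  · rw [codisjoint_iff, ← sup_assoc, hD.sup_eq_top]

theorem AD3_ker_summand {R : Type u} [Ring R]
    (A : (N : Type v) → [AddCommGroup N] → [Module R N] → Prop)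
    (hiso : ClosedUnderIso R A) (hsum : ClosedUnderSummands R A)
    (M : Type v) [AddCommGroup M] [Module R M] (hM : IsAD3 R A M)
    (M₁ M₂ : Submodule R M) (hcompl : IsCompl M₁ M₂)
    (f : M₁ →ₗ[R] M₂)
    (hrange : IsSummand (LinearMap.range f))
    (hrangeA : A (LinearMap.range f)) :
    IsSummand (LinearMap.ker f) := by
  classical
  obtain ⟨C₀, hC₀⟩ := hrange
  set F : M₁ →ₗ[R] M := M₂.subtype.comp f with hFdef
  set g : M₁ →ₗ[R] M := M₁.subtype + F with hgdef
  set I' : Submodule R M := (LinearMap.range f).map M₂.subtype with hI'def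
  set C : Submodule R M := C₀.map M₂.subtype with hCdef
  set T : Submodule R M := LinearMap.range g with hTdef
  set K' : Submodule R M := (LinearMap.ker f).map M₁.subtype with hK'def
  have hinj2 : Function.Injective M₂.subtype := Submodule.injective_subtype _
  have hinj1 : Function.Injective M₁.subtype := Submodule.injective_subtype _
  have hIC_inf : I' ⊓ C = ⊥ := by
    rw [hI'def, hCdef, ← Submodule.map_inf _ hinj2, hC₀.inf_eq_bot, Submodule.map_bot]
  have hIC_sup : I' ⊔ C = M₂ := by
    rw [hI'def, hCdef, ← Submodule.map_sup, hC₀.sup_eq_top, Submodule.map_top,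
      Submodule.range_subtype]
  have h12_inf : M₁ ⊓ M₂ = ⊥ := hcompl.inf_eq_bot
  have h12_sup : M₁ ⊔ M₂ = ⊤ := hcompl.sup_eq_top
  have hI'le : I' ≤ M₂ := Submodule.map_subtype_le _ _
  have hCle : C ≤ M₂ := Submodule.map_subtype_le _ _
  have hK'le : K' ≤ M₁ := Submodule.map_subtype_le _ _
  have hFmem : ∀ x : M₁, F x ∈ I' := fun x => ⟨f x, LinearMap.mem_range_self f x, rfl⟩
  -- X = T ⊔ C
  set X : Submodule R M := T ⊔ C with hXdef
  set Y : Submodule R M := M₁ ⊔ C with hYdef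
  have hXI' : IsCompl X I' := by
    constructor
    · rw [disjoint_iff, eq_bot_iff]
      rintro m ⟨hmX, hmI⟩
      rw [hXdef] at hmX
      obtain ⟨t, ht, c, hc, rfl⟩ := Submodule.mem_sup.mp hmX
      obtain ⟨x, rfl⟩ := ht
      have hx0 : (x : M) = 0 := by
        have hmem : (x : M) ∈ M₁ ⊓ M₂ := by
          constructor
          · exact x.2
          · have : (x : M) = (g x + c) - F x - c := by
              simp [hgdef]; abel
            rw [this]
            exact sub_mem (sub_mem (hI'le hmI) (hI'le (hFmem x))) (hCle hc)
        rw [h12_inf] at hmem; exact hmem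
      have hx : x = 0 := hinj1 (by simpa using hx0)
      have : g x + c ∈ I' ⊓ C := ⟨hmI, by simp [hx, hgdef, hc]⟩
      rw [hIC_inf] at this
      exact this
    · rw [codisjoint_iff, eq_top_iff, ← h12_sup]
      refine sup_le ?_ ?_
      · intro m hm
        have : m = g ⟨m, hm⟩ - F ⟨m, hm⟩ := by simp [hgdef]
        rw [this]
        exact sub_mem (Submodule.mem_sup_left (Submodule.mem_sup_left
          (LinearMap.mem_range_self g ⟨m, hm⟩))) (Submodule.mem_sup_right (hFmem ⟨m, hm⟩))
      · rw [← hIC_sup]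
        exact sup_le (le_sup_right) (le_trans le_sup_right le_sup_left)
  have hYI' : IsCompl Y I' := by
    constructor
    · rw [disjoint_iff, eq_bot_iff]
      rintro m ⟨hmY, hmI⟩
      rw [hYdef] at hmY
      obtain ⟨x, hx, c, hc, rfl⟩ := Submodule.mem_sup.mp hmY
      have hx0 : x ∈ M₁ ⊓ M₂ := by
        refine ⟨hx, ?_⟩
        have : x = (x + c) - c := by abel
        rw [this]
        exact sub_mem (hI'le hmI) (hCle hc)
      rw [h12_inf, Submodule.mem_bot] at hx0
      have : x + c ∈ I' ⊓ C := ⟨hmI, by simp [hx0, hc]⟩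
      rw [hIC_inf] at this; exact this
    · rw [codisjoint_iff, eq_top_iff, ← h12_sup]
      refine sup_le (le_trans le_sup_left le_sup_left) ?_
      rw [← hIC_sup]
      exact sup_le le_sup_right (le_trans le_sup_right le_sup_left)
  have hXY_sup : X ⊔ Y = ⊤ := by
    rw [eq_top_iff, ← h12_sup]
    refine sup_le (le_trans le_sup_left le_sup_right) ?_
    rw [← hIC_sup]
    refine sup_le ?_ (le_trans le_sup_right le_sup_left)
    rintro m ⟨y, ⟨x, rfl⟩, rfl⟩
    have : (M₂.subtype) (f x) = g x - (x : M) := by simp [hgdef]; rfl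
    rw [this]
    exact sub_mem (Submodule.mem_sup_left (Submodule.mem_sup_left (LinearMap.mem_range_self g x)))
      (Submodule.mem_sup_right (Submodule.mem_sup_left x.2))
  have hXY_inf : X ⊓ Y = K' ⊔ C := by
    apply le_antisymm
    · rintro m ⟨hmX, hmY⟩
      obtain ⟨t, ht, c, hc, rfl⟩ := Submodule.mem_sup.mp hmX
      obtain ⟨x, rfl⟩ := ht
      obtain ⟨x', hx', c', hc', heq⟩ := Submodule.mem_sup.mp hmY
      -- g x + c = x' + c'; g x = x + F x
      have hgx : (g x : M) = (x : M) + F x := by simp [hgdef]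
      have key : F x + (c - c') = x' - (x : M) := by
        have h2 : x' = g x + c - c' := by rw [← heq]; abel
        rw [h2, hgx]; abel
      have hM2 : F x + (c - c') ∈ M₂ := add_mem (hI'le (hFmem x))
        (sub_mem (hCle hc) (hCle hc'))
      have h0 : F x + (c - c') = 0 := by
        have : F x + (c - c') ∈ M₁ ⊓ M₂ := ⟨by rw [key]; exact sub_mem hx' x.2, hM2⟩
        rw [h12_inf] at this; exact this
      have hFeq : F x = c' - c := by
        rw [← sub_eq_zero, show F x - (c' - c) = F x + (c - c') by abel, h0]
      have hFx0 : F x ∈ I' ⊓ C := ⟨hFmem x, by rw [hFeq]; exact sub_mem hc' hc⟩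
      rw [hIC_inf, Submodule.mem_bot] at hFx0
      have hker : x ∈ LinearMap.ker f := by
        rw [LinearMap.mem_ker]
        exact hinj2 (by simpa [hFdef] using hFx0)
      have hgc : (g x : M) + c = (x : M) + c := by rw [hgx, hFx0]; abel
      rw [hgc]
      exact Submodule.add_mem _ (Submodule.mem_sup_left ⟨x, hker, rfl⟩) (Submodule.mem_sup_right hc)
    · refine sup_le ?_ (le_inf (le_sup_right) (le_sup_right))
      rintro m ⟨x, hx, rfl⟩
      constructor
      · have : (M₁.subtype x : M) = g x := by
          simp [hgdef, hFdef, LinearMap.mem_ker.mp hx]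
        rw [this]
        exact Submodule.mem_sup_left (LinearMap.mem_range_self g x)
      · exact Submodule.mem_sup_left x.2
  -- summands
  have hXs : IsSummand X := ⟨I', hXI'⟩
  have hYs : IsSummand Y := ⟨I', hYI'⟩
  -- A conditions
  have eI : (LinearMap.range f) ≃ₗ[R] I' :=
    Submodule.equivMapOfInjective M₂.subtype hinj2 _
  have hAX : A (M ⧸ X) := by
    have e := (Submodule.quotientEquivOfIsCompl X I' hXI').symm
    exact hiso _ _ (eI.trans e) hrangeA
  have hAY : A (M ⧸ Y) := by
    have e := (Submodule.quotientEquivOfIsCompl Y I' hYI').symm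
    exact hiso _ _ (eI.trans e) hrangeA
  obtain ⟨D, hD⟩ := hM X Y hXs hYs hAX hAY hXY_sup
  rw [hXY_inf] at hD
  -- K' ⊓ C = ⊥
  have hK'C : K' ⊓ C = ⊥ := by
    rw [eq_bot_iff, ← h12_inf]
    exact le_inf (le_trans inf_le_left hK'le) (le_trans inf_le_right hCle)
  -- IsCompl K' (C ⊔ D)
  have hKCD : IsCompl K' (C ⊔ D) := aux_modular_compl C D K' hD hK'C
  -- transfer to M₁
  refine ⟨Submodule.comap M₁.subtype (C ⊔ D), ?_⟩
  constructor
  · rw [disjoint_iff, eq_bot_iff]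
    rintro x ⟨hx1, hx2⟩
    have : (x : M) ∈ K' ⊓ (C ⊔ D) := ⟨⟨x, hx1, rfl⟩, hx2⟩
    rw [hKCD.inf_eq_bot] at this
    exact (Submodule.mem_bot R).mpr (hinj1 (by simpa using this))
  · rw [codisjoint_iff, eq_top_iff]
    rintro x -
    have hx : (x : M) ∈ K' ⊔ (C ⊔ D) := by rw [hKCD.sup_eq_top]; trivial
    obtain ⟨k, hk, e, he, heq⟩ := Submodule.mem_sup.mp hx
    obtain ⟨y, hy, rfl⟩ := hk
    have heM1 : e ∈ M₁ := by
      have : e = (x : M) - M₁.subtype y := by rw [← heq]; abel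
      rw [this]; exact sub_mem x.2 y.2
    refine Submodule.mem_sup.mpr ⟨y, hy, ⟨e, heM1⟩, he, ?_⟩
    exact Subtype.ext heq
end

section
/- Let M be a module such that every factor module of M is A-injective, where A is a class of right R-modules closed under isomorphisms and direct summands. If M is an A-D3 module, then for any finite family X₁, …, Xₙ of direct summands of M with M/Xᵢ ∈ A for all i, the intersection ∩ᵢ Xᵢ is a direct summand of M. -/
universe u v

section AD3Aux

variable {R : Type u} [Ring R] {M : Type v} [AddCommGroup M] [Module R M]

private lemma injFor_congr {K N₁ N₂ : Type v} [AddCommGroup K] [Module R K]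
    [AddCommGroup N₁] [Module R N₁] [AddCommGroup N₂] [Module R N₂]
    (h : IsInjectiveFor R K N₁) (e : N₁ ≃ₗ[R] N₂) : IsInjectiveFor R K N₂ := by
  intro S f
  obtain ⟨g, hg⟩ := h S ((e.symm : N₂ →ₗ[R] N₁).comp f)
  refine ⟨(e : N₁ →ₗ[R] N₂).comp g, fun a => ?_⟩
  have h1 := hg a
  simp only [LinearMap.comp_apply] at h1 ⊢
  rw [h1]
  simp

private lemma isCompl_left_of {F T P Q : Submodule R M} (hPQ : IsCompl P Q) (hPT : P ≤ T)
    (hFT : F ⊓ T = P) (hsup : F ⊔ T = ⊤) : IsCompl F (Q ⊓ T) := by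
  have hPF : P ≤ F := hFT ▸ inf_le_left
  have hT : P ⊔ Q ⊓ T = T := by
    rw [← sup_inf_assoc_of_le Q hPT, hPQ.sup_eq_top, top_inf_eq]
  constructor
  · rw [disjoint_iff]
    calc F ⊓ (Q ⊓ T) = F ⊓ (T ⊓ Q) := by rw [inf_comm Q T]
      _ = F ⊓ T ⊓ Q := by rw [inf_assoc]
      _ = P ⊓ Q := by rw [hFT]
      _ = ⊥ := hPQ.inf_eq_bot
  · rw [codisjoint_iff]
    calc F ⊔ Q ⊓ T = (F ⊔ P) ⊔ Q ⊓ T := by rw [sup_eq_left.mpr hPF]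
      _ = F ⊔ (P ⊔ Q ⊓ T) := sup_assoc F P (Q ⊓ T)
      _ = F ⊔ T := by rw [hT]
      _ = ⊤ := hsup

private lemma isCompl_sup_of {P Q T C : Submodule R M} (hPQ : IsCompl P Q) (hPT : P ≤ T)
    (hTC : IsCompl T C) : IsCompl (P ⊔ C) (Q ⊓ T) := by
  have hT : P ⊔ Q ⊓ T = T := by
    rw [← sup_inf_assoc_of_le Q hPT, hPQ.sup_eq_top, top_inf_eq]
  constructor
  · rw [disjoint_iff]
    have h1 : (P ⊔ C) ⊓ T = P := by
      rw [sup_inf_assoc_of_le C hPT, inf_comm C T, hTC.inf_eq_bot, sup_bot_eq]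
    calc (P ⊔ C) ⊓ (Q ⊓ T) = (P ⊔ C) ⊓ (T ⊓ Q) := by rw [inf_comm Q T]
      _ = (P ⊔ C) ⊓ T ⊓ Q := by rw [inf_assoc]
      _ = P ⊓ Q := by rw [h1]
      _ = ⊥ := hPQ.inf_eq_bot
  · rw [codisjoint_iff]
    calc (P ⊔ C) ⊔ Q ⊓ T = (P ⊔ Q ⊓ T) ⊔ C := by
          rw [sup_assoc, sup_comm C (Q ⊓ T), ← sup_assoc]
      _ = T ⊔ C := by rw [hT]
      _ = ⊤ := hTC.sup_eq_top

private lemma isCompl_shift {a b c : Submodule R M} (h : IsCompl (a ⊔ b) c)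
    (hab : Disjoint a b) : IsCompl a (b ⊔ c) := by
  constructor
  · rw [disjoint_iff]
    have key : (b ⊔ c) ⊓ (a ⊔ b) = b := by
      rw [sup_inf_assoc_of_le c (le_sup_right : b ≤ a ⊔ b)]
      have hc : c ⊓ (a ⊔ b) = ⊥ := by rw [inf_comm, h.inf_eq_bot]
      rw [hc, sup_bot_eq]
    calc a ⊓ (b ⊔ c) = a ⊓ (a ⊔ b) ⊓ (b ⊔ c) := by
          rw [inf_eq_left.mpr (le_sup_left : a ≤ a ⊔ b)]
      _ = a ⊓ ((a ⊔ b) ⊓ (b ⊔ c)) := inf_assoc a (a ⊔ b) (b ⊔ c)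
      _ = a ⊓ ((b ⊔ c) ⊓ (a ⊔ b)) := by rw [inf_comm (a ⊔ b) (b ⊔ c)]
      _ = a ⊓ b := by rw [key]
      _ = ⊥ := hab.eq_bot
  · rw [codisjoint_iff, ← sup_assoc, h.sup_eq_top]

private lemma iInf_sup_compl {ι : Type} [Nonempty ι]
    {P : ι → Submodule R M} {T C : Submodule R M}
    (hPT : ∀ i, P i ≤ T) (hTC : IsCompl T C) :
    (⨅ i, (P i ⊔ C)) = (⨅ i, P i) ⊔ C := by
  apply le_antisymm
  · intro x hx
    rw [Submodule.mem_iInf] at hx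
    have i0 : ι := Classical.arbitrary ι
    obtain ⟨p0, hp0, c0, hc0, hx0⟩ := Submodule.mem_sup.mp (hx i0)
    have hp0all : ∀ i, p0 ∈ P i := by
      intro i
      obtain ⟨p, hp, c, hc, hxi⟩ := Submodule.mem_sup.mp (hx i)
      have hsub : p0 - p = c - c0 := by
        rw [sub_eq_sub_iff_add_eq_add]
        rw [hx0, ← hxi, add_comm]
      have h1 : p0 - p ∈ T := sub_mem (hPT i0 hp0) (hPT i hp)
      have h2 : p0 - p ∈ C := hsub ▸ sub_mem hc hc0
      have h3 : p0 - p = 0 := by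
        have h5 := hTC.inf_eq_bot
        have hm : p0 - p ∈ T ⊓ C := ⟨h1, h2⟩
        rw [h5] at hm
        simpa using hm
      have h4 : p0 = p := sub_eq_zero.mp h3
      exact h4 ▸ hp
    exact Submodule.mem_sup.mpr ⟨p0, (Submodule.mem_iInf _).mpr hp0all, c0, hc0, hx0⟩
  · exact sup_le (le_iInf fun i => le_sup_of_le_left (iInf_le _ i))
      (le_iInf fun i => le_sup_right)

private lemma iInf_eq_inf_succAbove {n : ℕ} (p : Fin (n+1)) (H : Fin (n+1) → Submodule R M) :
    (⨅ i, H i) = H p ⊓ ⨅ i : Fin n, H (p.succAbove i) := by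
  apply le_antisymm
  · exact le_inf (iInf_le _ p) (le_iInf fun i => iInf_le _ _)
  · refine le_iInf fun j => ?_
    rcases eq_or_ne j p with h | h
    · exact h ▸ inf_le_left
    · obtain ⟨i, hi⟩ := Fin.exists_succAbove_eq h
      exact le_trans inf_le_right (hi ▸ iInf_le _ i)

variable (A : (N : Type v) → [AddCommGroup N] → [Module R N] → Prop)

private lemma E_exists (hiso : ClosedUnderIso R A) (hsum : ClosedUnderSummands R A)
    (hinj : ∀ W : Submodule R M, IsAInjective R A (M ⧸ W))
    (X Y : Submodule R M) (hX : IsSummand X) (hY : IsSummand Y)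
    (hAX : A (M ⧸ X)) :
    ∃ E : Submodule R M, IsSummand E ∧ A (M ⧸ E) ∧ Y ⊔ E = ⊤ ∧ Y ⊓ E = X ⊓ Y := by
  classical
  obtain ⟨X', hXX'⟩ := hX
  obtain ⟨Y', hYY'⟩ := hY
  set π : M →ₗ[R] ↥X' := X'.linearProjOfIsCompl X hXX'.symm with hπdef
  set τ : M →ₗ[R] ↥Y := Y.linearProjOfIsCompl Y' hYY' with hτdef
  set θ : M →ₗ[R] M := X'.subtype ∘ₗ π ∘ₗ Y.subtype ∘ₗ τ with hθdef
  set N₀ : Submodule R M := LinearMap.range θ with hN₀def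
  have hN₀X' : N₀ ≤ X' := by
    rintro _ ⟨m, rfl⟩
    exact (π (τ m : M)).2
  have hθY : ∀ y ∈ Y, θ y = (π y : M) := by
    intro y hy
    have h1 : τ y = ⟨y, hy⟩ := Submodule.linearProjOfIsCompl_apply_left hYY' ⟨y, hy⟩
    simp only [hθdef, LinearMap.comp_apply, h1]
    rfl
  have hπY_memN₀ : ∀ y ∈ Y, (π y : M) ∈ N₀ := by
    intro y hy
    exact ⟨y, hθY y hy⟩
  have hker : LinearMap.ker θ = Y' ⊔ (X ⊓ Y) := by
    apply le_antisymm
    · intro m hm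
      have hm' : (π ((τ m : M)) : M) = 0 := by
        simpa [hθdef, LinearMap.comp_apply] using hm
      have hπ0 : π ((τ m : M)) = 0 := Subtype.ext hm'
      have hτX : (τ m : M) ∈ X :=
        (Submodule.linearProjOfIsCompl_apply_eq_zero_iff hXX'.symm).mp hπ0
      have hsplit : m - (τ m : M) ∈ Y' := by
        have h2 : τ (m - (τ m : M)) = 0 := by
          rw [map_sub]
          rw [show τ (τ m : M) = τ m from Submodule.linearProjOfIsCompl_apply_left hYY' (τ m)]
          simp
        exact (Submodule.linearProjOfIsCompl_apply_eq_zero_iff hYY').mp h2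
      have hsum' : m = (m - (τ m : M)) + (τ m : M) := by abel
      rw [hsum']
      exact Submodule.add_mem_sup hsplit ⟨hτX, (τ m).2⟩
    · apply sup_le
      · intro y' hy'
        have h1 : τ y' = 0 := Submodule.linearProjOfIsCompl_apply_right hYY' ⟨y', hy'⟩
        simp [hθdef, LinearMap.comp_apply, h1]
      · rintro w ⟨hwX, hwY⟩
        have h1 : θ w = (π w : M) := hθY w hwY
        have h2 : π w = 0 :=
          (Submodule.linearProjOfIsCompl_apply_eq_zero_iff hXX'.symm).mpr hwX
        simp only [LinearMap.mem_ker, h1, h2, Submodule.coe_zero]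
  have hsurj : Function.Surjective θ.rangeRestrict := LinearMap.surjective_rangeRestrict θ
  have e₁ : (M ⧸ (Y' ⊔ (X ⊓ Y))) ≃ₗ[R] ↥N₀ :=
    (Submodule.quotEquivOfEq _ _ (by rw [← hker, LinearMap.ker_rangeRestrict])).trans
      (θ.rangeRestrict.quotKerEquivOfSurjective hsurj)
  have hAX' : A ↥X' := hiso (M ⧸ X) ↥X' (Submodule.quotientEquivOfIsCompl X X' hXX') hAX
  have hNinj : IsInjectiveFor R ↥X' ↥N₀ :=
    injFor_congr (hinj (Y' ⊔ (X ⊓ Y)) ↥X' hAX') e₁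
  set S : Submodule R ↥X' := Submodule.comap X'.subtype N₀ with hSdef
  obtain ⟨g, hg⟩ := hNinj S ((Submodule.comapSubtypeEquivOfLe hN₀X') : ↥S →ₗ[R] ↥N₀)
  set F : M →ₗ[R] ↥N₀ := g ∘ₗ π with hFdef
  have hproj : ∀ x : ↥N₀, F (x : M) = x := by
    intro x
    have hxX' : (x : M) ∈ X' := hN₀X' x.2
    have h1 : π (x : M) = ⟨(x : M), hxX'⟩ :=
      Submodule.linearProjOfIsCompl_apply_left hXX'.symm ⟨(x : M), hxX'⟩
    have hmem : (⟨(x : M), hxX'⟩ : ↥X') ∈ S := by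
      simp only [hSdef, Submodule.mem_comap, Submodule.coe_subtype]
      exact x.2
    have h2 := hg ⟨⟨(x : M), hxX'⟩, hmem⟩
    simp only [hFdef, LinearMap.comp_apply, h1]
    rw [h2]
    apply Subtype.ext
    simp [Submodule.comapSubtypeEquivOfLe]
  have hcompl : IsCompl N₀ (LinearMap.ker F) := LinearMap.isCompl_of_proj hproj
  set E : Submodule R M := LinearMap.ker F with hEdef
  have hXE : X ≤ E := by
    intro x hx
    have h1 : π x = 0 :=
      (Submodule.linearProjOfIsCompl_apply_eq_zero_iff hXX'.symm).mpr hx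
    simp only [hEdef, LinearMap.mem_ker, hFdef, LinearMap.comp_apply, h1, map_zero]
  have hFY : ∀ y ∈ Y, (F y : M) = (π y : M) := by
    intro y hy
    have hmem : (π y) ∈ S := by
      simp only [hSdef, Submodule.mem_comap, Submodule.coe_subtype]
      exact hπY_memN₀ y hy
    have h2 := hg ⟨π y, hmem⟩
    simp only [hFdef, LinearMap.comp_apply]
    rw [h2]
    simp [Submodule.comapSubtypeEquivOfLe]
  refine ⟨E, ⟨N₀, hcompl.symm⟩, ?_, ?_, ?_⟩
  · have hScompl : IsCompl S (Submodule.comap X'.subtype E) := by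
      constructor
      · rw [disjoint_iff, eq_bot_iff]
        rintro x ⟨hx1, hx2⟩
        have hm : (x : M) ∈ N₀ ⊓ E := ⟨hx1, hx2⟩
        rw [hcompl.inf_eq_bot] at hm
        simp only [Submodule.mem_bot] at hm ⊢
        exact Subtype.ext hm
      · rw [codisjoint_iff, eq_top_iff]
        rintro x -
        have hFx : ((F (x : M)) : M) ∈ X' := hN₀X' (F (x : M)).2
        have hdiff : (x : M) - ((F (x : M)) : M) ∈ E := by
          simp only [hEdef, LinearMap.mem_ker, map_sub]
          rw [hproj (F (x : M))]
          simp
        have hdiffX' : (x : M) - ((F (x : M)) : M) ∈ X' := sub_mem x.2 hFx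
        refine Submodule.mem_sup.mpr ⟨⟨((F (x : M)) : M), hFx⟩, ?_,
          ⟨(x : M) - ((F (x : M)) : M), hdiffX'⟩, ?_, ?_⟩
        · simp only [hSdef, Submodule.mem_comap, Submodule.coe_subtype]
          exact (F (x : M)).2
        · simp only [Submodule.mem_comap, Submodule.coe_subtype]
          exact hdiff
        · apply Subtype.ext
          simp
    have hAS : A ↥S := hsum ↥X' S ⟨_, hScompl⟩ hAX'
    have e₂ : ↥S ≃ₗ[R] ↥N₀ := Submodule.comapSubtypeEquivOfLe hN₀X'
    have e₃ : (M ⧸ E) ≃ₗ[R] ↥N₀ := Submodule.quotientEquivOfIsCompl E N₀ hcompl.symm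
    exact hiso ↥S (M ⧸ E) (e₂.trans e₃.symm) hAS
  · rw [eq_top_iff]
    rintro m -
    obtain ⟨m₀, hm₀⟩ : ((F m : M)) ∈ N₀ := (F m).2
    set y : M := (τ m₀ : M) with hydef
    have hyY : y ∈ Y := (τ m₀).2
    have hθm₀ : θ m₀ = (π y : M) := by
      simp only [hθdef, LinearMap.comp_apply]
      rfl
    have hFy : F y = F m := by
      apply Subtype.ext
      rw [hFY y hyY, ← hθm₀, hm₀]
    have hdiff : m - y ∈ E := by
      simp only [hEdef, LinearMap.mem_ker, map_sub, hFy]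
      simp
    have hsum' : m = y + (m - y) := by abel
    rw [hsum']
    exact Submodule.add_mem_sup hyY hdiff
  · apply le_antisymm
    · rintro z ⟨hzY, hzE⟩
      have h1 : (F z : M) = 0 := by
        have h0 : F z = 0 := hzE
        rw [h0]; rfl
      have h2 : (π z : M) = 0 := by rw [← hFY z hzY]; exact h1
      have h3 : π z = 0 := Subtype.ext h2
      exact ⟨(Submodule.linearProjOfIsCompl_apply_eq_zero_iff hXX'.symm).mp h3, hzY⟩
    · rintro w ⟨hwX, hwY⟩
      exact ⟨hwY, hXE hwX⟩

end AD3Aux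

theorem AD3_finite_inter_summand {R : Type u} [Ring R]
    (A : (N : Type v) → [AddCommGroup N] → [Module R N] → Prop)
    (hiso : ClosedUnderIso R A) (hsum : ClosedUnderSummands R A)
    (M : Type v) [AddCommGroup M] [Module R M]
    (hinj : ∀ X : Submodule R M, IsAInjective R A (M ⧸ X))
    (hM : IsAD3 R A M)
    (n : ℕ) (X : Fin n → Submodule R M)
    (hXsum : ∀ i, IsSummand (X i)) (hXA : ∀ i, A (M ⧸ X i)) :
    IsSummand (⨅ i, X i) := by
  classical
  induction n with
  | zero =>
    have h : (⨅ i : Fin 0, X i) = ⊤ := iInf_of_empty X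
    rw [h]
    exact ⟨⊥, isCompl_top_bot⟩
  | succ n ih =>
    rcases Nat.eq_zero_or_pos n with hn0 | hnpos
    · subst hn0
      have h : (⨅ i, X i) = X 0 :=
        le_antisymm (iInf_le _ 0) (le_iInf fun i => by rw [Fin.fin_one_eq_zero i])
      rw [h]
      exact hXsum 0
    · have instNE : Nonempty (Fin n) := ⟨⟨0, hnpos⟩⟩
      -- Step 1: preprocess the family so that F i ⊔ X last = ⊤ for all i < n,
      -- preserving the infimum.
      have pre : ∀ l : ℕ, l ≤ n → ∃ F : Fin (n+1) → Submodule R M,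
          (∀ i, IsSummand (F i)) ∧ (∀ i, A (M ⧸ F i)) ∧ ((⨅ i, F i) = ⨅ i, X i) ∧
          F (Fin.last n) = X (Fin.last n) ∧
          (∀ i : Fin (n+1), (i : ℕ) < l → F i ⊔ X (Fin.last n) = ⊤) := by
        intro l
        induction l with
        | zero => exact fun _ => ⟨X, hXsum, hXA, rfl, rfl, fun i h => absurd h (Nat.not_lt_zero _)⟩
        | succ l ihl =>
          intro hl
          obtain ⟨F, hF1, hF2, hF3, hF4, hF5⟩ := ihl (Nat.le_of_succ_le hl)
          have hln : l < n := hl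
          set p : Fin (n+1) := ⟨l, by omega⟩ with hpdef
          set Yl : Submodule R M := ⨅ i : Fin n, F (p.succAbove i) with hYdef
          have hYsum : IsSummand Yl :=
            ih (fun i => F (p.succAbove i)) (fun i => hF1 _) (fun i => hF2 _)
          obtain ⟨E, hE1, hE2, hE3, hE4⟩ :=
            E_exists A hiso hsum hinj (F p) Yl (hF1 p) hYsum (hF2 p)
          have hpne : p ≠ Fin.last n := by
            intro hcon
            have := congrArg Fin.val hcon
            simp [hpdef, Fin.val_last] at this
            omega
          refine ⟨Function.update F p E, ?_, ?_, ?_, ?_, ?_⟩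
          · intro i
            rcases eq_or_ne i p with rfl | h
            · rw [Function.update_self]; exact hE1
            · rw [Function.update_of_ne h]; exact hF1 i
          · intro i
            rcases eq_or_ne i p with rfl | h
            · rw [Function.update_self]; exact hE2
            · rw [Function.update_of_ne h]; exact hF2 i
          · have hsa : ∀ i : Fin n, Function.update F p E (p.succAbove i) = F (p.succAbove i) :=
              fun i => Function.update_of_ne (Fin.succAbove_ne p i) _ _
            rw [iInf_eq_inf_succAbove p (Function.update F p E), iInf_congr hsa,
              Function.update_self]
            calc E ⊓ Yl = Yl ⊓ E := inf_comm E Yl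
              _ = F p ⊓ Yl := hE4
              _ = ⨅ i, F i := (iInf_eq_inf_succAbove p F).symm
              _ = ⨅ i, X i := hF3
          · rw [Function.update_of_ne (Ne.symm hpne)]; exact hF4
          · intro i hi
            rcases eq_or_ne i p with rfl | h
            · rw [Function.update_self]
              have hYle : Yl ≤ X (Fin.last n) := by
                obtain ⟨j, hj⟩ := Fin.exists_succAbove_eq (Ne.symm hpne)
                calc Yl ≤ F (p.succAbove j) := iInf_le _ j
                  _ = X (Fin.last n) := by rw [hj, hF4]
              rw [eq_top_iff, ← hE3]
              exact sup_le (le_sup_of_le_right hYle) le_sup_left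
            · have hvl : (i : ℕ) ≠ l := by
                intro hh
                exact h (Fin.ext (by simp [hpdef, hh]))
              have : (i : ℕ) < l := by omega
              rw [Function.update_of_ne h]
              exact hF5 i this
      obtain ⟨F, hF1, hF2, hF3, hF4, hF5⟩ := pre n le_rfl
      set T : Submodule R M := X (Fin.last n) with hTdef
      obtain ⟨CT, hTCT⟩ := hXsum (Fin.last n)
      have hsupFT : ∀ i : Fin n, F i.castSucc ⊔ T = ⊤ := by
        intro i
        exact hF5 i.castSucc (by simp)
      have hPsum : ∀ i : Fin n, IsSummand (F i.castSucc ⊓ T) := by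
        intro i
        exact hM (F i.castSucc) T (hF1 _) (hXsum _) (hF2 _) (hXA _) (hsupFT i)
      choose Q hQ using hPsum
      set G : Fin n → Submodule R M := fun i => (F i.castSucc ⊓ T) ⊔ CT with hGdef
      have hGsum : ∀ i, IsSummand (G i) :=
        fun i => ⟨Q i ⊓ T, isCompl_sup_of (hQ i) inf_le_right hTCT⟩
      have hGA : ∀ i, A (M ⧸ G i) := by
        intro i
        have h1 : IsCompl (F i.castSucc) (Q i ⊓ T) :=
          isCompl_left_of (hQ i) inf_le_right rfl (hsupFT i)
        have e₁ : (M ⧸ F i.castSucc) ≃ₗ[R] ↥(Q i ⊓ T) :=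
          Submodule.quotientEquivOfIsCompl _ _ h1
        have h2 : IsCompl (G i) (Q i ⊓ T) := isCompl_sup_of (hQ i) inf_le_right hTCT
        have e₂ : (M ⧸ G i) ≃ₗ[R] ↥(Q i ⊓ T) := Submodule.quotientEquivOfIsCompl _ _ h2
        exact hiso (M ⧸ F i.castSucc) (M ⧸ G i) (e₁.trans e₂.symm) (hF2 _)
      have key : (⨅ i, G i) = (⨅ i, X i) ⊔ CT := by
        have h3 : (⨅ i : Fin n, ((F i.castSucc ⊓ T) ⊔ CT))
            = (⨅ i : Fin n, (F i.castSucc ⊓ T)) ⊔ CT :=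
          iInf_sup_compl (fun i => inf_le_right) hTCT
        have h4 : (⨅ i : Fin n, (F i.castSucc ⊓ T)) = ⨅ i, X i := by
          rw [← iInf_inf]
          have h5 : (⨅ i : Fin n, F i.castSucc) = ⨅ i : Fin n, F ((Fin.last n).succAbove i) := by
            refine iInf_congr fun i => ?_
            rw [Fin.succAbove_last]
          rw [h5, inf_comm, ← hF4, ← iInf_eq_inf_succAbove (Fin.last n) F, hF3]
        rw [hGdef] at *
        rw [h3, h4]
      obtain ⟨c, hc⟩ := ih G hGsum hGA
      rw [key] at hc
      have hZT : (⨅ i, X i) ≤ T := iInf_le _ _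
      have hdisj : Disjoint (⨅ i, X i) CT := Disjoint.mono_left hZT hTCT.disjoint
      exact ⟨CT ⊔ c, isCompl_shift hc hdisj⟩
end

section
/- Let M be a module such that every submodule of M is A-projective, where A is a class of right R-modules closed under isomorphisms and direct summands. Then M is an A-C3 module if and only if for any two direct summands M₁, M₂ of M with M₁, M₂ ∈ A, the sum M₁ + M₂ is a direct summand of M. -/
universe u v

section Aux
variable {R : Type u} [Ring R] {M : Type v} [AddCommGroup M] [Module R M]

/-- A "summand of a summand" criterion: if `S ⊕ K = Y` inside `M` and `Y` is a summand of `M`,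
then `S` is a summand of `M`. -/
lemma isSummand_of_isCompl_in_summand {S K Y : Submodule R M}
    (hdis : S ⊓ K = ⊥) (hsup : S ⊔ K = Y) (hY : IsSummand Y) : IsSummand S := by
  obtain ⟨Y'', hc⟩ := hY
  have hSle : S ≤ Y := by rw [← hsup]; exact le_sup_left
  have hKle : K ≤ Y := by rw [← hsup]; exact le_sup_right
  refine ⟨K ⊔ Y'', ⟨?_, ?_⟩⟩
  · rw [Submodule.disjoint_def]
    intro x hxS hx
    obtain ⟨k, hk, w, hw, hkw⟩ := Submodule.mem_sup.1 hx
    have hxk : x - k ∈ Y := Y.sub_mem (hSle hxS) (hKle hk)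
    have hxw : x - k ∈ Y'' := by
      have : x - k = w := by rw [← hkw]; abel
      rw [this]; exact hw
    have h0 : x - k = 0 := (Submodule.disjoint_def.1 hc.disjoint) _ hxk hxw
    have hxK : x ∈ K := by
      have : x = k := by rw [sub_eq_zero] at h0; exact h0
      rw [this]; exact hk
    have : x ∈ S ⊓ K := ⟨hxS, hxK⟩
    rw [hdis] at this; exact this
  · rw [codisjoint_iff, ← sup_assoc, hsup, ← codisjoint_iff]
    exact hc.codisjoint

end Aux

theorem AC3_iff_sum_of_summands {R : Type u} [Ring R]
    (A : (N : Type v) → [AddCommGroup N] → [Module R N] → Prop)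
    (hiso : ClosedUnderIso R A) (hsum : ClosedUnderSummands R A)
    (M : Type v) [AddCommGroup M] [Module R M]
    (hproj : ∀ N : Submodule R M, IsAProjective R A N) :
    IsAC3 R A M ↔
      ∀ X Y : Submodule R M, A X → A Y → IsSummand X → IsSummand Y →
        IsSummand (X ⊔ Y) := by
  constructor
  · -- forward direction
    intro hC3 X Y hAX hAY hSX hSY
    obtain ⟨X', hX⟩ := hSX
    -- the projection onto X' along X, viewed as an endomorphism of M
    set q : M →ₗ[R] M := X'.subtype ∘ₗ X'.projectionOnto X hX.symm with hq
    have hqX : ∀ x ∈ X, q x = 0 := by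
      intro x hx
      simp [hq, Submodule.projectionOnto_apply_of_mem_right hX.symm hx]
    have hkerq : ∀ x, q x = 0 → x ∈ X := by
      intro x hx
      have : X'.projectionOnto X hX.symm x = 0 := by
        apply Subtype.ext
        simpa [hq] using hx
      exact (Submodule.linearProjOfIsCompl_apply_eq_zero_iff hX.symm).1 this
    set Y' : Submodule R M := Submodule.map q Y with hY'
    have hmem : ∀ c : Y, (q ∘ₗ Y.subtype) c ∈ Y' := by
      intro c
      exact ⟨(c : M), c.2, rfl⟩
    set r : Y →ₗ[R] Y' := LinearMap.codRestrict Y' (q ∘ₗ Y.subtype) hmem with hr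
    have hr_surj : Function.Surjective r := by
      rintro ⟨z, hz⟩
      obtain ⟨y, hy, rfl⟩ := hz
      exact ⟨⟨y, hy⟩, rfl⟩
    obtain ⟨h, hh⟩ := hproj Y' Y hAY Y' r LinearMap.id hr_surj
    have key : ∀ y' : Y', q ((h y' : Y) : M) = (y' : M) := by
      intro y'
      have := LinearMap.ext_iff.1 hh y'
      exact congrArg Subtype.val this
    set S : Submodule R M := LinearMap.range (Y.subtype ∘ₗ h) with hS
    have hSle : S ≤ Y := by
      rintro _ ⟨y', rfl⟩
      exact (h y').2
    have hXS : X ⊓ S = ⊥ := by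
      rw [eq_bot_iff]
      rintro x ⟨hxX, hxS⟩
      obtain ⟨y', rfl⟩ := hxS
      have h1 : q ((h y' : Y) : M) = (y' : M) := key y'
      have h2 : q ((h y' : Y) : M) = 0 := hqX _ hxX
      have : (y' : M) = 0 := by rw [← h1, h2]
      have hy0 : y' = 0 := Subtype.ext this
      simp [hy0]
    set K : Submodule R M := X ⊓ Y with hK
    have hSK : S ⊓ K = ⊥ := by
      rw [eq_bot_iff]
      rintro x ⟨hxS, hxX, _⟩
      have : x ∈ X ⊓ S := ⟨hxX, hxS⟩
      rw [hXS] at this; exact this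
    have hSKY : S ⊔ K = Y := by
      apply le_antisymm (sup_le hSle inf_le_right)
      intro y hy
      set y' : Y' := r ⟨y, hy⟩ with hy'
      set a : M := ((h y' : Y) : M) with ha
      have haS : a ∈ S := ⟨y', rfl⟩
      have hqa : q a = (y' : M) := key y'
      have hy'' : (y' : M) = q y := rfl
      have hyaK : y - a ∈ K := by
        constructor
        · apply hkerq
          rw [map_sub, hqa, hy'', sub_self]
        · exact Y.sub_mem hy (hSle haS)
      have : y = a + (y - a) := by abel
      rw [this]
      exact Submodule.add_mem _ (Submodule.mem_sup_left haS)
        (Submodule.mem_sup_right hyaK)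
    have hXSsup : X ⊔ S = X ⊔ Y := by
      apply le_antisymm (sup_le le_sup_left (hSle.trans le_sup_right))
      apply sup_le le_sup_left
      rw [← hSKY]
      exact sup_le le_sup_right ((inf_le_left : X ⊓ Y ≤ X).trans le_sup_left)
    -- `S` is a summand of `M`
    have hSsummand : IsSummand S := isSummand_of_isCompl_in_summand hSK hSKY hSY
    -- `A S` holds
    have hAS : A S := by
      set S₀ : Submodule R Y := S.comap Y.subtype with hS₀
      set K₀ : Submodule R Y := K.comap Y.subtype with hK₀
      have hcompl : IsCompl S₀ K₀ := by
        constructor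
        · rw [Submodule.disjoint_def]
          intro x hx1 hx2
          have : (x : M) ∈ S ⊓ K := ⟨hx1, hx2⟩
          rw [hSK] at this
          exact Subtype.ext this
        · rw [codisjoint_iff, eq_top_iff]
          rintro ⟨y, hy⟩ _
          have : y ∈ S ⊔ K := by rw [hSKY]; exact hy
          obtain ⟨a, haS, b, hbK, hab⟩ := Submodule.mem_sup.1 this
          have haY : a ∈ Y := hSle haS
          have hbY : b ∈ Y := inf_le_right (α := Submodule R M) hbK
          refine Submodule.mem_sup.2 ⟨⟨a, haY⟩, haS, ⟨b, hbY⟩, hbK, ?_⟩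
          exact Subtype.ext hab
      have hAS₀ : A S₀ := hsum Y S₀ ⟨K₀, hcompl⟩ hAY
      exact hiso S₀ S (Submodule.comapSubtypeEquivOfLe hSle) hAS₀
    have := hC3 X S hAX hAS ⟨X', hX⟩ hSsummand hXS
    rwa [hXSsup] at this
  · -- reverse direction
    intro H X Y hAX hAY hX hY _
    exact H X Y hAX hAY hX hY
end

section
/- Let M be a module such that every submodule of M is A-projective, where A is a class of artinian right R-modules closed under isomorphisms and direct summands. If M is an A-C3 module, then every submodule N ∈ A of M that is isomorphic to a direct summand of M is itself a direct summand of M. -/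
universe u v

section AC3Aux

lemma isCompl_of_eq {R : Type u} [Ring R] {M : Type v} [AddCommGroup M] [Module R M]
    (X Y : Submodule R M) (h1 : X ⊓ Y = ⊥) (h2 : X ⊔ Y = ⊤) : IsCompl X Y :=
  ⟨disjoint_iff.2 h1, codisjoint_iff.2 h2⟩

lemma AC3_key {R : Type u} [Ring R]
    (A : (N : Type v) → [AddCommGroup N] → [Module R N] → Prop)
    (hiso : ClosedUnderIso R A) (hsum : ClosedUnderSummands R A)
    (hart : ∀ (N : Type v) [AddCommGroup N] [Module R N], A N → IsArtinian R N)
    (M : Type v) [AddCommGroup M] [Module R M]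
    (hproj : ∀ N : Submodule R M, IsAProjective R A N)
    (hM : IsAC3 R A M) (N₀ : Submodule R M) (hN₀ : A N₀) :
    ∀ N : Submodule R M, N ≤ N₀ → A N →
      (∃ D : Submodule R M, IsSummand D ∧ Nonempty (N ≃ₗ[R] D)) → IsSummand N := by
  haveI : IsArtinian R N₀ := hart _ hN₀
  have wf0 : WellFounded ((· < ·) : Submodule R ↥N₀ → Submodule R ↥N₀ → Prop) :=
    IsWellFounded.wf
  have wf2 : WellFounded (fun X Y : Submodule R M => X < Y ∧ Y ≤ N₀) := by
    refine Subrelation.wf (r := InvImage (· < ·) fun X => Submodule.comap N₀.subtype X)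
      ?_ (InvImage.wf _ wf0)
    rintro X Y ⟨hlt, hle⟩
    refine lt_of_le_of_ne (Submodule.comap_mono hlt.le) fun h => ?_
    have h2 := congrArg (Submodule.map N₀.subtype) h
    rw [Submodule.map_comap_subtype, Submodule.map_comap_subtype,
      inf_of_le_right (hlt.le.trans hle), inf_of_le_right hle] at h2
    exact hlt.ne h2
  intro N
  refine wf2.induction (C := fun N => N ≤ N₀ → A ↥N →
    (∃ D : Submodule R M, IsSummand D ∧ Nonempty (↥N ≃ₗ[R] ↥D)) → IsSummand N) N ?_
  clear N
  rintro N IH hle hA ⟨D, ⟨D', hDD'⟩, ⟨e⟩⟩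
  have hDbot : D ⊓ D' = ⊥ := hDD'.inf_eq_bot
  have hDtop : D ⊔ D' = ⊤ := hDD'.sup_eq_top
  set π := Submodule.linearProjOfIsCompl D D' hDD' with hπdef
  have hπzero : ∀ x : M, π x = 0 ↔ x ∈ D' := fun x =>
    Submodule.linearProjOfIsCompl_apply_eq_zero_iff hDD'
  by_cases hND' : N ⊓ D' = ⊥
  · -- Case 1 : N ⊓ D' = ⊥
    haveI : IsArtinian R ↥D := hart ↥D (hiso ↥N ↥D e hA)
    set t : ↥D →ₗ[R] ↥D := π ∘ₗ N.subtype ∘ₗ e.symm.toLinearMap with htdef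
    have htapp : ∀ d : ↥D, t d = π ((e.symm d : ↥N) : M) := fun d => rfl
    have tinj : Function.Injective t := by
      refine (injective_iff_map_eq_zero t).2 fun d hd => ?_
      rw [htapp] at hd
      have h1 : ((e.symm d : ↥N) : M) ∈ N ⊓ D' := ⟨(e.symm d).2, (hπzero _).1 hd⟩
      rw [hND', Submodule.mem_bot] at h1
      have h2 : (e.symm d : ↥N) = 0 := Subtype.ext h1
      have h3 := congrArg e h2
      rwa [e.apply_symm_apply, map_zero] at h3
    have tsurj := IsArtinian.surjective_of_injective_endomorphism t tinj
    refine ⟨D', isCompl_of_eq N D' hND' ?_⟩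
    rw [eq_top_iff]
    rintro m -
    obtain ⟨d, hd⟩ := tsurj (π m)
    refine Submodule.mem_sup.2 ⟨((e.symm d : ↥N) : M), (e.symm d).2,
      m - ((e.symm d : ↥N) : M), ?_, by abel⟩
    rw [← hπzero, map_sub, ← htapp, hd, sub_self]
  · by_cases hsub : N ≤ D'
    · -- Case 2 : N ≤ D', graph trick
      set w : ↥N →ₗ[R] M := N.subtype + D.subtype ∘ₗ e.toLinearMap with hwdef
      have hw : ∀ n : ↥N, w n = (n : M) + ((e n : ↥D) : M) := fun n => rfl
      set X := LinearMap.range w with hXdef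
      have winj : Function.Injective w := by
        refine (injective_iff_map_eq_zero w).2 fun n hn => ?_
        rw [hw] at hn
        have h1 : ((e n : ↥D) : M) ∈ D ⊓ D' := by
          refine ⟨(e n).2, ?_⟩
          rw [eq_neg_of_add_eq_zero_right hn]
          exact neg_mem (hsub n.2)
        rw [hDbot, Submodule.mem_bot] at h1
        have h2 : (e n : ↥D) = 0 := Subtype.ext h1
        have h3 := congrArg e.symm h2
        rwa [e.symm_apply_apply, map_zero] at h3
      have hXD : X ⊓ D = ⊥ := by
        rw [eq_bot_iff]
        rintro x ⟨⟨n, rfl⟩, hxD⟩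
        have h1 : (n : M) ∈ D ⊓ D' := by
          refine ⟨?_, hsub n.2⟩
          have hx : (n : M) = w n - ((e n : ↥D) : M) := by rw [hw]; abel
          rw [hx]
          exact sub_mem hxD (e n).2
        rw [hDbot, Submodule.mem_bot] at h1
        have h2 : n = 0 := Subtype.ext h1
        rw [Submodule.mem_bot, h2, map_zero]
      have hXD' : X ⊓ D' = ⊥ := by
        rw [eq_bot_iff]
        rintro x ⟨⟨n, rfl⟩, hxD'⟩
        have h1 : ((e n : ↥D) : M) ∈ D ⊓ D' := by
          refine ⟨(e n).2, ?_⟩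
          have hx : ((e n : ↥D) : M) = w n - (n : M) := by rw [hw]; abel
          rw [hx]
          exact sub_mem hxD' (hsub n.2)
        rw [hDbot, Submodule.mem_bot] at h1
        have h2 : (e n : ↥D) = 0 := Subtype.ext h1
        have h3 : n = 0 := by
          have h4 := congrArg e.symm h2
          rwa [e.symm_apply_apply, map_zero] at h4
        rw [Submodule.mem_bot, h3, map_zero]
      have hXtop : X ⊔ D' = ⊤ := by
        rw [eq_top_iff]
        rintro m -
        have hm : m ∈ D ⊔ D' := by rw [hDtop]; trivial
        obtain ⟨d, hd, d', hd', hsum'⟩ := Submodule.mem_sup.1 hm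
        set n : ↥N := e.symm ⟨d, hd⟩ with hndef
        have hen : ((e n : ↥D) : M) = d := by rw [hndef, e.apply_symm_apply]
        refine Submodule.mem_sup.2 ⟨w n, ⟨n, rfl⟩, m - w n, ?_, by abel⟩
        have : m - w n = d' - (n : M) := by rw [hw, hen, ← hsum']; abel
        rw [this]
        exact sub_mem hd' (hsub n.2)
      have hXsummand : IsSummand X := ⟨D', isCompl_of_eq X D' hXD' hXtop⟩
      have hAX : A ↥X := hiso ↥N ↥X (LinearEquiv.ofInjective w winj) hA
      have hAD : A ↥D := hiso ↥N ↥D e hA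
      have c3 := hM X D hAX hAD hXsummand ⟨D', hDD'⟩ hXD
      have hXDsup : X ⊔ D = N ⊔ D := by
        apply le_antisymm
        · refine sup_le ?_ le_sup_right
          rintro x ⟨n, rfl⟩
          rw [hw]
          exact Submodule.add_mem _ (Submodule.mem_sup_left n.2)
            (Submodule.mem_sup_right (e n).2)
        · refine sup_le ?_ le_sup_right
          intro n hn
          have hx : n = w ⟨n, hn⟩ - ((e ⟨n, hn⟩ : ↥D) : M) := by rw [hw]; abel
          rw [hx]
          exact Submodule.sub_mem _ (Submodule.mem_sup_left ⟨⟨n, hn⟩, rfl⟩)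
            (Submodule.mem_sup_right (e ⟨n, hn⟩).2)
      rw [hXDsup] at c3
      obtain ⟨E, hE⟩ := c3
      have hEbot : (N ⊔ D) ⊓ E = ⊥ := hE.inf_eq_bot
      have hEtop : (N ⊔ D) ⊔ E = ⊤ := hE.sup_eq_top
      refine ⟨D ⊔ E, isCompl_of_eq N (D ⊔ E) ?_ ?_⟩
      · rw [eq_bot_iff]
        rintro x ⟨hxN, hxDE⟩
        obtain ⟨d, hd, ev, hev, hsum'⟩ := Submodule.mem_sup.1 hxDE
        have h1 : ev ∈ (N ⊔ D) ⊓ E := by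
          refine ⟨?_, hev⟩
          have : ev = x - d := by rw [← hsum']; abel
          rw [this]
          exact Submodule.sub_mem _ (Submodule.mem_sup_left hxN) (Submodule.mem_sup_right hd)
        rw [hEbot, Submodule.mem_bot] at h1
        have h2 : x ∈ D ⊓ D' := by
          refine ⟨?_, hsub hxN⟩
          rw [← hsum', h1, add_zero]
          exact hd
        rw [hDbot] at h2
        exact h2
      · rw [← sup_assoc]
        exact hEtop
    · -- Case 3 : split N = N₁ ⊕ N₂
      set π' : M →ₗ[R] M := D.subtype ∘ₗ π with hπ'def
      have hπ'app : ∀ x : M, π' x = ((π x : ↥D) : M) := fun x => rfl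
      set K : Submodule R M := N.map π' with hKdef
      have hKmem : ∀ n : ↥N, π' (n : M) ∈ K := fun n => Submodule.mem_map_of_mem n.2
      set p : ↥N →ₗ[R] ↥K := LinearMap.codRestrict K (π' ∘ₗ N.subtype) hKmem with hpdef
      have hp : ∀ n : ↥N, ((p n : ↥K) : M) = π' (n : M) := fun n => rfl
      have psurj : Function.Surjective p := by
        rintro ⟨k, hk⟩
        obtain ⟨n, hn, hnk⟩ := hk
        exact ⟨⟨n, hn⟩, Subtype.ext hnk⟩
      obtain ⟨h, hh⟩ := hproj K ↥N hA ↥K p LinearMap.id psurj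
      have hph : ∀ k : ↥K, p (h k) = k := fun k => LinearMap.congr_fun hh k
      set N₁ : Submodule R M := LinearMap.range (N.subtype ∘ₗ h) with hN₁def
      set N₂ : Submodule R M := N ⊓ D' with hN₂def
      have hN₁mem : ∀ k : ↥K, ((h k : ↥N) : M) ∈ N₁ := fun k => ⟨k, rfl⟩
      have hN₁N : N₁ ≤ N := by rintro x ⟨k, rfl⟩; exact (h k).2
      have hN₂N : N₂ ≤ N := inf_le_left
      have hinf : N₁ ⊓ N₂ = ⊥ := by
        rw [eq_bot_iff]
        rintro x ⟨⟨k, rfl⟩, _, hxD'⟩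
        have h0 : π' ((h k : ↥N) : M) = 0 := by
          rw [hπ'app]
          have hz : π (((h k : ↥N) : M)) = 0 := (hπzero (((h k : ↥N) : M))).2 hxD'
          rw [hz]
          rfl
        have h1 : (k : M) = 0 := by
          have e1 : ((p (h k) : ↥K) : M) = π' ((h k : ↥N) : M) := hp (h k)
          rw [hph k] at e1
          rw [e1, h0]
        have hk0 : k = 0 := Subtype.ext h1
        rw [Submodule.mem_bot, hk0, map_zero]
      have hsup : N₁ ⊔ N₂ = N := by
        refine le_antisymm (sup_le hN₁N hN₂N) fun n hn => ?_
        set k : ↥K := p ⟨n, hn⟩ with hkdef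
        have e1 : π' (((h k : ↥N) : M)) = π' n := by
          rw [← hp (h k), hph k, hkdef]
          exact hp ⟨n, hn⟩
        have e2 : π ((n : M) - ((h k : ↥N) : M)) = 0 := by
          rw [map_sub, sub_eq_zero]
          have e3 : ((π ((h k : ↥N) : M) : ↥D) : M) = ((π n : ↥D) : M) := by
            rw [← hπ'app, ← hπ'app]; exact e1
          exact (Subtype.ext e3).symm
        have hmem2 : (n : M) - ((h k : ↥N) : M) ∈ N₂ :=
          ⟨sub_mem hn (h k).2, (hπzero _).1 e2⟩
        exact Submodule.mem_sup.2 ⟨_, hN₁mem k, _, hmem2, by abel⟩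
      have hN₁lt : N₁ < N := by
        refine lt_of_le_of_ne hN₁N fun hEq => hND' ?_
        have hz : N ⊓ N₂ = ⊥ := by rw [← hEq]; exact hinf
        rwa [inf_eq_right.2 hN₂N] at hz
      have hN₂lt : N₂ < N := by
        refine lt_of_le_of_ne hN₂N fun hEq => hsub ?_
        rw [← hEq]
        exact inf_le_right
      have hsubinj : Function.Injective N.subtype := N.injective_subtype
      set N₁' : Submodule R ↥N := N₁.comap N.subtype with hN₁'def
      set N₂' : Submodule R ↥N := N₂.comap N.subtype with hN₂'def
      have hmap₁ : N₁'.map N.subtype = N₁ := by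
        rw [hN₁'def, Submodule.map_comap_subtype, inf_eq_right.2 hN₁N]
      have hmap₂ : N₂'.map N.subtype = N₂ := by
        rw [hN₂'def, Submodule.map_comap_subtype, inf_eq_right.2 hN₂N]
      have hinf' : N₁' ⊓ N₂' = ⊥ := by
        apply Submodule.map_injective_of_injective hsubinj
        rw [Submodule.map_inf _ hsubinj, hmap₁, hmap₂, hinf, Submodule.map_bot]
      have hsup' : N₁' ⊔ N₂' = ⊤ := by
        apply Submodule.map_injective_of_injective hsubinj
        rw [Submodule.map_sup, hmap₁, hmap₂, hsup, Submodule.map_top, Submodule.range_subtype]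
      have hcompl' : IsCompl N₁' N₂' := isCompl_of_eq _ _ hinf' hsup'
      have einj : Function.Injective (e.toLinearMap) := fun a b hab => e.injective hab
      have hDsubinj : Function.Injective D.subtype := D.injective_subtype
      have hinfD' : (N₁'.map e.toLinearMap) ⊓ (N₂'.map e.toLinearMap) = ⊥ := by
        rw [← Submodule.map_inf _ einj, hinf', Submodule.map_bot]
      have hsupD' : (N₁'.map e.toLinearMap) ⊔ (N₂'.map e.toLinearMap) = ⊤ := by
        rw [← Submodule.map_sup, hsup', Submodule.map_top, LinearEquiv.range]
      set D₁ : Submodule R M := (N₁'.map e.toLinearMap).map D.subtype with hD₁def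
      set D₂ : Submodule R M := (N₂'.map e.toLinearMap).map D.subtype with hD₂def
      have hinfD : D₁ ⊓ D₂ = ⊥ := by
        rw [hD₁def, hD₂def, ← Submodule.map_inf _ hDsubinj, hinfD', Submodule.map_bot]
      have hsupD : D₁ ⊔ D₂ = D := by
        rw [hD₁def, hD₂def, ← Submodule.map_sup, hsupD', Submodule.map_top,
          Submodule.range_subtype]
      have hD₁D : D₁ ≤ D := Submodule.map_subtype_le _ _
      have hD₂D : D₂ ≤ D := Submodule.map_subtype_le _ _
      have hcomplD₁ : IsCompl D₁ (D₂ ⊔ D') := by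
        refine isCompl_of_eq _ _ ?_ ?_
        · rw [eq_bot_iff]
          rintro x ⟨hx1, hx2⟩
          obtain ⟨y, hy, z, hz, hyz⟩ := Submodule.mem_sup.1 hx2
          have hzD : z ∈ D ⊓ D' := by
            refine ⟨?_, hz⟩
            have : z = x - y := by rw [← hyz]; abel
            rw [this]
            exact sub_mem (hD₁D hx1) (hD₂D hy)
          rw [hDbot, Submodule.mem_bot] at hzD
          have hxm : x ∈ D₁ ⊓ D₂ := by
            refine ⟨hx1, ?_⟩
            rw [← hyz, hzD, add_zero]
            exact hy
          rw [hinfD] at hxm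
          exact hxm
        · rw [← sup_assoc, hsupD, hDtop]
      have hcomplD₂ : IsCompl D₂ (D₁ ⊔ D') := by
        refine isCompl_of_eq _ _ ?_ ?_
        · rw [eq_bot_iff]
          rintro x ⟨hx1, hx2⟩
          obtain ⟨y, hy, z, hz, hyz⟩ := Submodule.mem_sup.1 hx2
          have hzD : z ∈ D ⊓ D' := by
            refine ⟨?_, hz⟩
            have : z = x - y := by rw [← hyz]; abel
            rw [this]
            exact sub_mem (hD₂D hx1) (hD₁D hy)
          rw [hDbot, Submodule.mem_bot] at hzD
          have hxm : x ∈ D₁ ⊓ D₂ := by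
            refine ⟨?_, hx1⟩
            rw [← hyz, hzD, add_zero]
            exact hy
          rw [hinfD] at hxm
          exact hxm
        · rw [← sup_assoc, sup_comm D₂ D₁, hsupD, hDtop]
      have iso1 : (↥N₁) ≃ₗ[R] ↥D₁ :=
        ((Submodule.comapSubtypeEquivOfLe hN₁N).symm.trans
          (Submodule.equivMapOfInjective e.toLinearMap einj N₁')).trans
          (Submodule.equivMapOfInjective D.subtype hDsubinj (N₁'.map e.toLinearMap))
      have iso2 : (↥N₂) ≃ₗ[R] ↥D₂ :=
        ((Submodule.comapSubtypeEquivOfLe hN₂N).symm.trans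
          (Submodule.equivMapOfInjective e.toLinearMap einj N₂')).trans
          (Submodule.equivMapOfInjective D.subtype hDsubinj (N₂'.map e.toLinearMap))
      have hAN₁' : A ↥N₁' := hsum ↥N N₁' ⟨N₂', hcompl'⟩ hA
      have hAN₂' : A ↥N₂' := hsum ↥N N₂' ⟨N₁', hcompl'.symm⟩ hA
      have hAN₁ : A ↥N₁ := hiso ↥N₁' ↥N₁ (Submodule.comapSubtypeEquivOfLe hN₁N) hAN₁'
      have hAN₂ : A ↥N₂ := hiso ↥N₂' ↥N₂ (Submodule.comapSubtypeEquivOfLe hN₂N) hAN₂'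
      have s₁ : IsSummand N₁ :=
        IH N₁ ⟨hN₁lt, hle⟩ (hN₁N.trans hle) hAN₁ ⟨D₁, ⟨D₂ ⊔ D', hcomplD₁⟩, ⟨iso1⟩⟩
      have s₂ : IsSummand N₂ :=
        IH N₂ ⟨hN₂lt, hle⟩ (hN₂N.trans hle) hAN₂ ⟨D₂, ⟨D₁ ⊔ D', hcomplD₂⟩, ⟨iso2⟩⟩
      have final := hM N₁ N₂ hAN₁ hAN₂ s₁ s₂ hinf
      rwa [hsup] at final

end AC3Aux

theorem AC3_iso_summand_of_artinian {R : Type u} [Ring R]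
    (A : (N : Type v) → [AddCommGroup N] → [Module R N] → Prop)
    (hiso : ClosedUnderIso R A) (hsum : ClosedUnderSummands R A)
    (hart : ∀ (N : Type v) [AddCommGroup N] [Module R N], A N → IsArtinian R N)
    (M : Type v) [AddCommGroup M] [Module R M]
    (hproj : ∀ N : Submodule R M, IsAProjective R A N)
    (hM : IsAC3 R A M) :
    ∀ N : Submodule R M, A N →
      (∃ D : Submodule R M, IsSummand D ∧ Nonempty (N ≃ₗ[R] D)) →
      IsSummand N := by
  intro N hAN hex
  exact AC3_key A hiso hsum hart M hproj hM N hAN N le_rfl hAN hex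
end

section
/- Let Q be a quasi-injective right R-module. If X₁, …, Xₙ are semisimple submodules of Q that are each direct summands of Q, then X₁ + ⋯ + Xₙ is a direct summand of Q. -/
universe u v

section Aux

variable {R : Type u} [Ring R] {Q : Type v} [AddCommGroup Q] [Module R Q]

/-- Maps into a summand of a quasi-injective module extend. -/
lemma extend_to_summand (hQ : IsInjectiveFor R Q Q) {X X' : Submodule R Q}
    (h : IsCompl X X') (A : Submodule R Q) (f : A →ₗ[R] X) :
    ∃ g : Q →ₗ[R] X, ∀ a : A, g a = f a := by
  obtain ⟨g', hg'⟩ := hQ A (X.subtype ∘ₗ f)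
  refine ⟨(X.projectionOnto X' h) ∘ₗ g', fun a => ?_⟩
  have := hg' a
  simp only [LinearMap.coe_comp, Function.comp_apply, Submodule.coe_subtype] at this ⊢
  rw [this, Submodule.linearProjOfIsCompl_apply_left h (f a)]

/-- C2: a submodule isomorphic to a summand is a summand. -/
lemma summand_of_iso (hQ : IsInjectiveFor R Q Q) {W V : Submodule R Q}
    (hW : IsSummand W) (e : (↥W) ≃ₗ[R] ↥V) : IsSummand V := by
  obtain ⟨W', hW'⟩ := hW
  obtain ⟨g, hg⟩ := extend_to_summand hQ hW' V (e.symm : ↥V →ₗ[R] ↥W)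
  let h : Q →ₗ[R] V := (e : ↥W →ₗ[R] ↥V) ∘ₗ g
  have hh : ∀ x : V, h x = x := fun x => by
    simp only [h, LinearMap.coe_comp, Function.comp_apply, LinearEquiv.coe_coe]
    rw [hg x]
    simp
  exact ⟨LinearMap.ker h, LinearMap.isCompl_of_proj hh⟩

/-- If `A ⊕ B = Y` (internally) and `Y` is a summand, then `A` is a summand. -/
lemma summand_of_summand_of_summand {Y Yc A B : Submodule R Q} (hY : IsCompl Y Yc)
    (hA : A ≤ Y) (hB : B ≤ Y) (hsup : A ⊔ B = Y) (hinf : A ⊓ B = ⊥) :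
    IsSummand A := by
  refine ⟨B ⊔ Yc, ⟨?_, ?_⟩⟩
  · rw [disjoint_iff, eq_bot_iff]
    rintro q ⟨hqA, hq2⟩
    obtain ⟨b, hb, c, hc, rfl⟩ := Submodule.mem_sup.mp hq2
    have hcY : c ∈ Y := by
      have : c = (b + c) - b := by abel
      rw [this]
      exact sub_mem (hA hqA) (hB hb)
    have : c = 0 := by
      have := hY.disjoint.le_bot ⟨hcY, hc⟩
      simpa using this
    subst this
    have : b + 0 ∈ A ⊓ B := ⟨hqA, by simpa using hb⟩
    rw [hinf] at this
    simpa using this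
  · rw [codisjoint_iff, ← sup_assoc, hsup, ← codisjoint_iff]
    exact hY.codisjoint

/-- C3 for quasi-injective modules. -/
lemma c3_of_quasiInjective (hQ : IsInjectiveFor R Q Q) {X Y : Submodule R Q}
    (hX : IsSummand X) (hY : IsSummand Y) (hXY : X ⊓ Y = ⊥) :
    IsSummand (X ⊔ Y) := by
  obtain ⟨X', hX'⟩ := hX
  set πX : Q →ₗ[R] Q := X.subtype ∘ₗ (X.projectionOnto X' hX') with hπX
  set πX' : Q →ₗ[R] Q := X'.subtype ∘ₗ (X'.projectionOnto X hX'.symm) with hπX'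
  have hadd : ∀ q : Q, πX q + πX' q = q := fun q =>
    Submodule.projection_add_projection_eq_self hX' q
  have hπXmem : ∀ q : Q, πX q ∈ X := fun q => (X.projectionOnto X' hX' q).2
  have hπX'mem : ∀ q : Q, πX' q ∈ X' := fun q => (X'.projectionOnto X hX'.symm q).2
  -- V := πX'(Y)
  set f : ↥Y →ₗ[R] Q := πX' ∘ₗ Y.subtype with hf
  have hfinj : Function.Injective f := by
    rw [← LinearMap.ker_eq_bot, eq_bot_iff]
    rintro ⟨y, hy⟩ hyk
    have h0 : πX' y = 0 := hyk
    have hyX : y ∈ X := by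
      have := hadd y
      rw [h0, add_zero] at this
      rw [← this]; exact hπXmem y
    have : y ∈ X ⊓ Y := ⟨hyX, hy⟩
    rw [hXY] at this
    simpa [Submodule.mem_bot] using this
  set V : Submodule R Q := LinearMap.range f with hV
  have hVX' : V ≤ X' := by
    rintro v ⟨y, rfl⟩
    exact hπX'mem y
  have hVsummand : IsSummand V :=
    summand_of_iso hQ hY (LinearEquiv.ofInjective f hfinj)
  obtain ⟨Z, hZ⟩ := hVsummand
  have hXV : X ⊔ V = X ⊔ Y := by
    apply le_antisymm
    · refine sup_le le_sup_left ?_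
      rintro v ⟨y, rfl⟩
      have : f y = (y : Q) - πX y := by
        simp only [hf, LinearMap.coe_comp, Function.comp_apply, Submodule.coe_subtype]
        exact eq_sub_of_add_eq' (hadd (y : Q))
      rw [this]
      exact sub_mem (Submodule.mem_sup_right y.2) (Submodule.mem_sup_left (hπXmem y))
    · refine sup_le le_sup_left ?_
      intro y hy
      have : (y : Q) = πX y + f ⟨y, hy⟩ := by
        simp only [hf, LinearMap.coe_comp, Function.comp_apply, Submodule.coe_subtype]
        exact (hadd y).symm
      rw [this]
      exact add_mem (Submodule.mem_sup_left (hπXmem y))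
        (Submodule.mem_sup_right ⟨⟨y, hy⟩, rfl⟩)
  rw [← hXV]
  refine ⟨X' ⊓ Z, ⟨?_, ?_⟩⟩
  · rw [disjoint_iff, eq_bot_iff]
    rintro q ⟨hq1, hqX', hqZ⟩
    obtain ⟨x, hx, v, hv, rfl⟩ := Submodule.mem_sup.mp hq1
    have hxX' : x ∈ X' := by
      have : x = (x + v) - v := by abel
      rw [this]
      exact sub_mem hqX' (hVX' hv)
    have hx0 : x = 0 := by
      have := hX'.disjoint.le_bot ⟨hx, hxX'⟩
      simpa using this
    subst hx0
    have : v ∈ V ⊓ Z := ⟨hv, by simpa using hqZ⟩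
    have := hZ.disjoint.le_bot this
    simpa using this
  · rw [codisjoint_iff, eq_top_iff]
    intro q _
    have hq : q = πX q + πX' q := (hadd q).symm
    have hX'q : πX' q ∈ X' := hπX'mem q
    have : πX' q ∈ V ⊔ Z := by rw [hZ.sup_eq_top]; trivial
    obtain ⟨v, hv, z, hz, hvz⟩ := Submodule.mem_sup.mp this
    have hzX' : z ∈ X' := by
      have : z = πX' q - v := by rw [← hvz]; abel
      rw [this]
      exact sub_mem hX'q (hVX' hv)
    rw [← hvz] at hq
    rw [hq.trans (by abel : πX q + (v + z) = (πX q + v) + z)]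
    exact add_mem
      (Submodule.mem_sup_left (add_mem (Submodule.mem_sup_left (hπXmem q))
        (Submodule.mem_sup_right hv)))
      (Submodule.mem_sup_right ⟨hzX', hz⟩)

/-- Key step: sup of a summand with a semisimple summand is a summand. -/
lemma step_lemma (hQ : IsInjectiveFor R Q Q) {S Y : Submodule R Q}
    (hS : IsSummand S) (hYss : IsSemisimpleModule R ↥Y) (hY : IsSummand Y) :
    IsSummand (S ⊔ Y) := by
  obtain ⟨Yc, hYc⟩ := hY
  obtain ⟨Z, hZ⟩ := exists_isCompl ((S ⊓ Y).comap Y.subtype)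
  set B : Submodule R Q := Z.map Y.subtype with hB
  have hmapc : ((S ⊓ Y).comap Y.subtype).map Y.subtype = S ⊓ Y := by
    rw [Submodule.map_comap_subtype]; exact inf_eq_right.mpr inf_le_right
  have hsup : (S ⊓ Y) ⊔ B = Y := by
    rw [← hmapc, hB, ← Submodule.map_sup, hZ.sup_eq_top, Submodule.map_top,
      Submodule.range_subtype]
  have hinf : (S ⊓ Y) ⊓ B = ⊥ := by
    rw [← hmapc, hB, ← Submodule.map_inf _ (Submodule.injective_subtype Y),
      hZ.inf_eq_bot, Submodule.map_bot]
  have hBY : B ≤ Y := by rw [hB]; rintro b ⟨z, _, rfl⟩; exact z.2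
  have hBsummand : IsSummand B :=
    summand_of_summand_of_summand hYc hBY inf_le_right (by rw [sup_comm]; exact hsup)
      (by rw [inf_comm]; exact hinf)
  have hSB : S ⊓ B = ⊥ := by
    rw [eq_bot_iff]
    rintro q ⟨hqS, hqB⟩
    have : q ∈ (S ⊓ Y) ⊓ B := ⟨⟨hqS, hBY hqB⟩, hqB⟩
    rw [hinf] at this
    exact this
  have hSBsup : S ⊔ B = S ⊔ Y := by
    apply le_antisymm (sup_le le_sup_left (le_trans hBY le_sup_right))
    refine sup_le le_sup_left ?_
    rw [← hsup]
    exact sup_le (le_trans inf_le_left le_sup_left) le_sup_right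
  rw [← hSBsup]
  exact c3_of_quasiInjective hQ hS hBsummand hSB

end Aux


theorem quasiInjective_sum_semisimple_summands {R : Type u} [Ring R]
    (Q : Type v) [AddCommGroup Q] [Module R Q]
    (hQ : IsInjectiveFor R Q Q)
    (n : ℕ) (X : Fin n → Submodule R Q)
    (hss : ∀ i, IsSemisimpleModule R (X i))
    (hsum : ∀ i, IsSummand (X i)) :
    IsSummand (⨆ i, X i) := by
  induction n with
  | zero =>
    rw [iSup_of_empty]
    exact ⟨⊤, isCompl_bot_top⟩
  | succ n ih =>
    have hsplit : (⨆ i : Fin (n+1), X i)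
        = (⨆ i : Fin n, X i.castSucc) ⊔ X (Fin.last n) := by
      apply le_antisymm
      · refine iSup_le fun i => ?_
        induction i using Fin.lastCases with
        | last => exact le_sup_right
        | cast j => exact le_trans (le_iSup (fun i : Fin n => X i.castSucc) j) le_sup_left
      · exact sup_le (iSup_le fun j => le_iSup X j.castSucc) (le_iSup X (Fin.last n))
    rw [hsplit]
    exact step_lemma hQ (ih (fun i => X i.castSucc) (fun i => hss _) (fun i => hsum _))
      (hss _) (hsum _)
end

section
/- Let P be a quasi-projective right R-module. If X₁, …, Xₙ are direct summands of P such that each factor P/Xᵢ is semisimple, then X₁ ∩ ⋯ ∩ Xₙ is a direct summand of P. -/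
universe u v

theorem quasiProj_binary_inter {R : Type u} [Ring R] {P : Type v} [AddCommGroup P] [Module R P]
    (hP : IsProjectiveFor R P P) (A B : Submodule R P)
    (hA : IsSummand A) (hB : IsSummand B) (hssA : IsSemisimpleModule R (P ⧸ A)) :
    IsSummand (A ⊓ B) := by
  obtain ⟨A₁, hA₁⟩ := hA
  obtain ⟨B₁, hB₁⟩ := hB
  set q : P →ₗ[R] P ⧸ A := A.mkQ with hq
  obtain ⟨T, hST⟩ := exists_isCompl (Submodule.map q (A ⊔ B))
  set S := Submodule.map q (A ⊔ B) with hS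
  set W := Submodule.comap q T with hW
  have hqA : ∀ x ∈ A, q x = 0 := fun x hx => (Submodule.Quotient.mk_eq_zero A).2 hx
  have hAW : A ≤ W := by
    intro x hx
    simp only [hW, Submodule.mem_comap, hqA x hx]
    exact T.zero_mem
  have hWB_inf : W ⊓ B = A ⊓ B := by
    apply le_antisymm
    · rintro x ⟨hxW, hxB⟩
      have hxS : q x ∈ S := Submodule.mem_map_of_mem (Submodule.mem_sup_right hxB)
      have hx0 : q x ∈ S ⊓ T := ⟨hxS, hxW⟩
      rw [hST.inf_eq_bot] at hx0
      have : x ∈ A := (Submodule.Quotient.mk_eq_zero A).1 hx0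
      exact ⟨this, hxB⟩
    · exact le_inf (inf_le_left.trans hAW) inf_le_right
  have hWB_sup : W ⊔ B = ⊤ := by
    rw [eq_top_iff]
    rintro m -
    have hm : q m ∈ S ⊔ T := by rw [hST.sup_eq_top]; trivial
    obtain ⟨s, hs, t, ht, hst⟩ := Submodule.mem_sup.1 hm
    obtain ⟨u, hu, hus⟩ := hs
    have hmu : m - u ∈ W := by
      simp only [hW, Submodule.mem_comap, map_sub, hus, ← hst, add_sub_cancel_left]
      exact ht
    obtain ⟨a, ha, b, hb, hab⟩ := Submodule.mem_sup.1 hu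
    refine Submodule.mem_sup.2 ⟨(m - u) + a, W.add_mem hmu (hAW ha), b, hb, ?_⟩
    rw [add_assoc, hab, sub_add_cancel]
  -- a section of q
  set σ : (P ⧸ A) →ₗ[R] P := A₁.subtype ∘ₗ (A.quotientEquivOfIsCompl A₁ hA₁).toLinearMap with hσdef
  have hσ : ∀ x, q (σ x) = x := by
    intro x
    exact
      Submodule.mk_quotientEquivOfIsCompl_apply hA₁ x
  set V := Submodule.map σ S with hV
  have hWV : IsCompl W V := by
    apply IsCompl.of_eq
    · apply le_antisymm _ bot_le
      rintro x ⟨hxW, hxV⟩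
      obtain ⟨s, hs, rfl⟩ := hxV
      have hsT : s ∈ T := by
        have h4 : q (σ s) ∈ T := hxW
        rwa [hσ s] at h4
      have h5 : s ∈ S ⊓ T := ⟨hs, hsT⟩
      rw [hST.inf_eq_bot] at h5
      have h6 : s = 0 := by simpa using h5
      simp [h6]
    · rw [eq_top_iff]
      rintro m -
      have hm : q m ∈ S ⊔ T := by rw [hST.sup_eq_top]; trivial
      obtain ⟨s, hs, t, ht, hst⟩ := Submodule.mem_sup.1 hm
      have hmW : m - σ s ∈ W := by
        simp only [hW, Submodule.mem_comap, map_sub, hσ s, ← hst, add_sub_cancel_left]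
        exact ht
      exact Submodule.mem_sup.2 ⟨m - σ s, hmW, σ s, Submodule.mem_map_of_mem hs,
        sub_add_cancel m (σ s)⟩
  -- quasi-projectivity step
  set e : P →ₗ[R] P := W.subtype ∘ₗ Submodule.linearProjOfIsCompl W V hWV with he_def
  have he : ∀ w ∈ W, e w = w := by
    intro w hw
    have h1 : Submodule.linearProjOfIsCompl W V hWV w = ⟨w, hw⟩ :=
      Submodule.linearProjOfIsCompl_apply_left hWV ⟨w, hw⟩
    simp [he_def, h1]
  have hrange : ∀ m, e m ∈ W := fun m => (Submodule.linearProjOfIsCompl W V hWV m).2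
  have hgsurj : Function.Surjective (B.mkQ ∘ₗ e) := by
    intro y
    obtain ⟨m, rfl⟩ := B.mkQ_surjective y
    have hm : m ∈ W ⊔ B := by rw [hWB_sup]; trivial
    obtain ⟨w, hw, b, hb, hwb⟩ := Submodule.mem_sup.1 hm
    refine ⟨w, ?_⟩
    have hb0 : B.mkQ b = 0 := (Submodule.Quotient.mk_eq_zero B).2 hb
    simp only [LinearMap.comp_apply, he w hw]
    rw [← hwb, map_add, hb0, add_zero]
  obtain ⟨h, hh⟩ := hP (P ⧸ B) (B.mkQ ∘ₗ e) B.mkQ hgsurj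
  set F : P →ₗ[R] P := e ∘ₗ h with hF
  have hFW : ∀ m, F m ∈ W := fun m => hrange (h m)
  have hFB : ∀ m, m - F m ∈ B := by
    intro m
    have h1 : B.mkQ (F m) = B.mkQ m := LinearMap.congr_fun hh m
    have h2 : B.mkQ (m - F m) = 0 := by rw [map_sub, h1, sub_self]
    exact (Submodule.Quotient.mk_eq_zero B).1 h2
  set G : P →ₗ[R] P := LinearMap.id - F with hG
  have hGm : ∀ m, G m = m - F m := fun m => rfl
  set D := Submodule.map G V with hD
  have hDB : D ≤ B := by
    rintro x ⟨v, hv, rfl⟩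
    rw [hGm v]
    exact hFB v
  have hWD : IsCompl W D := by
    apply IsCompl.of_eq
    · apply le_antisymm _ bot_le
      rintro x ⟨hxW, hxD⟩
      obtain ⟨v, hv, rfl⟩ := hxD
      have hvW : v ∈ W := by
        have h3 : v = G v + F v := by rw [hGm v]; abel
        rw [h3]
        exact W.add_mem hxW (hFW v)
      have : v ∈ W ⊓ V := ⟨hvW, hv⟩
      rw [hWV.inf_eq_bot] at this
      simp only [Submodule.mem_bot] at this
      simp [this]
    · rw [eq_top_iff]
      rintro m -
      have hm : m ∈ W ⊔ V := by rw [hWV.sup_eq_top]; trivial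
      obtain ⟨w, hw, v, hv, hwv⟩ := Submodule.mem_sup.1 hm
      refine Submodule.mem_sup.2 ⟨w + F v, W.add_mem hw (hFW v),
        G v, Submodule.mem_map_of_mem hv, ?_⟩
      rw [hGm v, ← hwv]; abel
  refine ⟨D ⊔ B₁, ?_⟩
  rw [← hWB_inf]
  apply IsCompl.of_eq
  · apply le_antisymm _ bot_le
    rintro x ⟨⟨hxW, hxB⟩, hx2⟩
    obtain ⟨d, hd, b₁, hb₁, hdb⟩ := Submodule.mem_sup.1 hx2
    have hb₁B : b₁ ∈ B := by
      have : b₁ = x - d := by rw [← hdb]; abel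
      rw [this]
      exact B.sub_mem hxB (hDB hd)
    have hb₁0 : b₁ = 0 := by
      have : b₁ ∈ B ⊓ B₁ := ⟨hb₁B, hb₁⟩
      rw [hB₁.inf_eq_bot] at this
      simpa using this
    have hxd : x = d := by rw [← hdb, hb₁0, add_zero]
    have : x ∈ W ⊓ D := ⟨hxW, hxd ▸ hd⟩
    rw [hWD.inf_eq_bot] at this
    exact this
  · rw [eq_top_iff]
    rintro m -
    have hm : m ∈ B ⊔ B₁ := by rw [hB₁.sup_eq_top]; trivial
    obtain ⟨b, hb, b₁, hb₁, hbb⟩ := Submodule.mem_sup.1 hm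
    have hbm : b ∈ W ⊔ D := by rw [hWD.sup_eq_top]; trivial
    obtain ⟨w, hw, d, hd, hwd⟩ := Submodule.mem_sup.1 hbm
    have hwB : w ∈ B := by
      have : w = b - d := by rw [← hwd]; abel
      rw [this]
      exact B.sub_mem hb (hDB hd)
    refine Submodule.mem_sup.2 ⟨w, ⟨hw, hwB⟩, d + b₁,
      Submodule.mem_sup.2 ⟨d, hd, b₁, hb₁, rfl⟩, ?_⟩
    rw [← hbb, ← hwd]; abel

theorem quasiProjective_inter_summands {R : Type u} [Ring R]
    (P : Type v) [AddCommGroup P] [Module R P]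
    (hP : IsProjectiveFor R P P)
    (n : ℕ) (X : Fin n → Submodule R P)
    (hss : ∀ i, IsSemisimpleModule R (P ⧸ X i))
    (hsum : ∀ i, IsSummand (X i)) :
    IsSummand (⨅ i, X i) := by
  induction n with
  | zero =>
    rw [iInf_of_empty]
    exact ⟨⊥, isCompl_top_bot⟩
  | succ n ih =>
    have key : (⨅ i, X i) = X 0 ⊓ ⨅ i : Fin n, X i.succ := by
      apply le_antisymm
      · exact le_inf (iInf_le _ 0) (le_iInf fun i => iInf_le _ i.succ)
      · refine le_iInf fun i => ?_
        refine Fin.cases ?_ ?_ i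
        · exact inf_le_left
        · exact fun j => inf_le_right.trans (iInf_le _ j)
    rw [key]
    exact quasiProj_binary_inter hP (X 0) (⨅ i : Fin n, X i.succ) (hsum 0)
      (ih (fun i => X i.succ) (fun i => hss i.succ) (fun i => hsum i.succ)) (hss 0)
end

section
/- For a right R-module M, the following are equivalent: (1) for any simple submodules A, B of M with A ≅ B and B a direct summand of M, A is a direct summand of M; (2) for any simple direct summands A, B of M with A ∩ B = 0, A ⊕ B is a direct summand of M. -/
universe u v

section AuxSDI

variable {R : Type u} [Ring R] {M : Type v} [AddCommGroup M] [Module R M]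

lemma summand_of_compl_sup {A B E : Submodule R M} (h : IsCompl (A ⊔ B) E)
    (hAB : A ⊓ B = ⊥) : IsSummand A := by
  refine ⟨B ⊔ E, IsCompl.of_eq ?_ ?_⟩
  · have h1 : (B ⊔ E) ⊓ (A ⊔ B) = B := by
      rw [sup_inf_assoc_of_le E (le_sup_right : B ≤ A ⊔ B)]
      rw [h.disjoint.symm.eq_bot, sup_bot_eq]
    calc A ⊓ (B ⊔ E) = (A ⊓ (A ⊔ B)) ⊓ (B ⊔ E) := by rw [inf_of_le_left (le_sup_left : A ≤ A ⊔ B)]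
      _ = A ⊓ ((B ⊔ E) ⊓ (A ⊔ B)) := by rw [inf_assoc, inf_comm (A ⊔ B)]
      _ = A ⊓ B := by rw [h1]
      _ = ⊥ := hAB
  · rw [← sup_assoc]
    exact h.codisjoint.eq_top

end AuxSDI

theorem simple_direct_injective_iff {R : Type u} [Ring R]
    (M : Type v) [AddCommGroup M] [Module R M] :
    (∀ A B : Submodule R M, IsSimpleModule R A → IsSimpleModule R B →
        Nonempty (A ≃ₗ[R] B) → IsSummand B → IsSummand A) ↔
      (∀ A B : Submodule R M, IsSimpleModule R A → IsSimpleModule R B →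
        IsSummand A → IsSummand B → A ⊓ B = ⊥ → IsSummand (A ⊔ B)) := by
  constructor
  · -- (1) → (2)
    intro h1 A B hA hB hsA ⟨CB, hCB⟩ hAB
    set π : M →ₗ[R] CB := Submodule.projectionOnto CB B hCB.symm with hπ
    set g : M →ₗ[R] M := CB.subtype ∘ₗ π with hg
    have hgken : ∀ x : M, x - g x ∈ B := by
      intro x
      have : π (x - g x) = 0 := by
        rw [map_sub]
        rw [show g x = ((π x : CB) : M) from rfl]
        rw [Submodule.projectionOnto_apply_left hCB.symm (π x), sub_self]
      rwa [← Submodule.ker_projectionOnto (q := B) hCB.symm, LinearMap.mem_ker]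
    set f : A →ₗ[R] M := g ∘ₗ A.subtype with hf
    have hfinj : Function.Injective f := by
      rw [← LinearMap.ker_eq_bot, LinearMap.ker_eq_bot']
      intro a ha
      have hmem : (a : M) ∈ A ⊓ B := by
        refine ⟨a.2, ?_⟩
        have h := hgken (a : M)
        rw [show g (a : M) = f a from rfl, ha, sub_zero] at h
        exact h
      rw [hAB] at hmem
      exact Subtype.ext hmem
    set A' : Submodule R M := LinearMap.range f with hA'
    have eA : A' ≃ₗ[R] A := (LinearEquiv.ofInjective f hfinj).symm
    haveI := hA
    have hA'simple : IsSimpleModule R A' := IsSimpleModule.congr eA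
    have hA'summand : IsSummand A' := h1 A' A hA'simple hA ⟨eA⟩ hsA
    obtain ⟨D, hD⟩ := hA'summand
    have hA'le : A' ≤ CB := by
      rintro x ⟨a, rfl⟩
      exact (π (a : M)).2
    have hsupeq : A ⊔ B = A' ⊔ B := by
      apply le_antisymm
      · refine sup_le ?_ le_sup_right
        intro a ha
        have : a = g a + (a - g a) := by abel
        rw [this]
        exact Submodule.add_mem _ (Submodule.mem_sup_left ⟨⟨a, ha⟩, rfl⟩)
          (Submodule.mem_sup_right (hgken a))
      · refine sup_le ?_ le_sup_right
        rintro x ⟨a, rfl⟩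
        have : f a = (a : M) - ((a : M) - g (a : M)) := by simp [hf]
        rw [this]
        exact Submodule.sub_mem _ (Submodule.mem_sup_left a.2)
          (Submodule.mem_sup_right (hgken (a : M)))
    rw [hsupeq]
    refine ⟨D ⊓ CB, IsCompl.of_eq ?_ ?_⟩
    · calc (A' ⊔ B) ⊓ (D ⊓ CB) = ((A' ⊔ B) ⊓ CB) ⊓ D := by
            rw [inf_comm D CB, ← inf_assoc]
        _ = A' ⊓ D := by
            rw [sup_inf_assoc_of_le B hA'le, hCB.disjoint.eq_bot, sup_bot_eq]
        _ = ⊥ := hD.disjoint.eq_bot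
    · rw [eq_top_iff]
      intro x _
      have hx1 : g x ∈ A' ⊔ D := hD.codisjoint.eq_top ▸ Submodule.mem_top
      obtain ⟨a', ha', d, hd, hsum⟩ := Submodule.mem_sup.mp hx1
      have hdC : d ∈ CB := by
        have : d = g x - a' := by rw [← hsum]; abel
        rw [this]
        exact Submodule.sub_mem _ (π x).2 (hA'le ha')
      have : x = a' + d + (x - g x) := by rw [hsum]; abel
      rw [this]
      exact Submodule.add_mem _
        (Submodule.add_mem _ (Submodule.mem_sup_left (Submodule.mem_sup_left ha'))
          (Submodule.mem_sup_right ⟨hd, hdC⟩))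
        (Submodule.mem_sup_left (Submodule.mem_sup_right (hgken x)))
  · -- (2) → (1)
    intro h2 A B hA hB ⟨e⟩ ⟨C, hC⟩
    set π : M →ₗ[R] B := Submodule.projectionOnto B C hC with hπ
    have hker : ∀ x : M, x - ((π x : B) : M) ∈ C := by
      intro x
      have : π (x - ((π x : B) : M)) = 0 := by
        rw [map_sub, Submodule.projectionOnto_apply_left hC (π x), sub_self]
      rwa [← Submodule.ker_projectionOnto (p := B) hC, LinearMap.mem_ker]
    haveI := hA; haveI := hB
    by_cases hc : ∀ a : A, π (a : M) = 0
    · -- A ≤ C ; use the graph trick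
      have hAleC : A ≤ C := by
        intro a ha
        have h := hker a
        rw [hc ⟨a, ha⟩] at h
        simpa using h
      have hABbot : A ⊓ B = ⊥ := by
        rw [eq_bot_iff]
        rintro x ⟨hxA, hxB⟩
        exact hC.symm.disjoint.le_bot ⟨hAleC hxA, hxB⟩
      set σ : B ≃ₗ[R] A := e.symm with hσ
      set fD : B →ₗ[R] M := B.subtype + A.subtype ∘ₗ (σ : B →ₗ[R] A) with hfD
      have hfDapp : ∀ b : B, fD b = (b : M) + ((σ b : A) : M) := fun b => rfl
      have hfDinj : Function.Injective fD := by
        rw [← LinearMap.ker_eq_bot, LinearMap.ker_eq_bot']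
        intro b hb
        rw [hfDapp] at hb
        have hbA : (b : M) ∈ A := by
          have : (b : M) = -((σ b : A) : M) := by
            rw [eq_neg_iff_add_eq_zero]; exact hb
          rw [this]; exact A.neg_mem (σ b).2
        have : (b : M) ∈ A ⊓ B := ⟨hbA, b.2⟩
        rw [hABbot] at this
        exact Subtype.ext this
      set D : Submodule R M := LinearMap.range fD with hD
      have hDsimple : IsSimpleModule R D :=
        IsSimpleModule.congr (LinearEquiv.ofInjective fD hfDinj).symm
      have hDC : IsCompl D C := by
        refine IsCompl.of_eq ?_ ?_
        · rw [eq_bot_iff]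
          rintro x ⟨⟨b, rfl⟩, hxC⟩
          rw [hfDapp] at hxC ⊢
          have hbC : (b : M) ∈ C := by
            have : (b : M) = ((b : M) + ((σ b : A) : M)) - ((σ b : A) : M) := by abel
            rw [this]
            exact C.sub_mem hxC (hAleC (σ b).2)
          have : (b : M) ∈ B ⊓ C := ⟨b.2, hbC⟩
          rw [hC.disjoint.eq_bot] at this
          rw [this]
          have : σ b = σ 0 := by
            congr 1; exact Subtype.ext this
          rw [this]; simp
        · rw [eq_top_iff]
          intro x _
          have hx : x = fD (π x) + ((x - ((π x : B) : M)) - ((σ (π x) : A) : M)) := by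
            rw [hfDapp]; abel
          rw [hx]
          exact Submodule.add_mem _ (Submodule.mem_sup_left ⟨π x, rfl⟩)
            (Submodule.mem_sup_right (C.sub_mem (hker x) (hAleC (σ (π x)).2)))
      have hDB : D ⊓ B = ⊥ := by
        rw [eq_bot_iff]
        rintro x ⟨⟨b, rfl⟩, hxB⟩
        rw [hfDapp] at hxB ⊢
        have hσbB : ((σ b : A) : M) ∈ B := by
          have : ((σ b : A) : M) = ((b : M) + ((σ b : A) : M)) - (b : M) := by abel
          rw [this]; exact B.sub_mem hxB b.2
        have : ((σ b : A) : M) ∈ A ⊓ B := ⟨(σ b).2, hσbB⟩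
        rw [hABbot] at this
        have hb0 : b = 0 := by
          have : σ b = 0 := Subtype.ext this
          simpa using congrArg e this
        rw [hb0]; simp
      obtain ⟨E, hE⟩ := h2 D B hDsimple hB ⟨C, hDC⟩ ⟨C, hC⟩ hDB
      have hsupeq : D ⊔ B = A ⊔ B := by
        apply le_antisymm
        · refine sup_le ?_ le_sup_right
          rintro x ⟨b, rfl⟩
          rw [hfDapp]
          exact Submodule.add_mem _ (Submodule.mem_sup_right b.2)
            (Submodule.mem_sup_left (σ b).2)
        · refine sup_le ?_ le_sup_right
          intro a ha
          have h1 : σ (e ⟨a, ha⟩) = ⟨a, ha⟩ := e.symm_apply_apply _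
          have h2' : a = fD (e ⟨a, ha⟩) - ((e ⟨a, ha⟩ : B) : M) := by
            rw [hfDapp, h1]; abel
          rw [h2']
          exact Submodule.sub_mem _ (Submodule.mem_sup_left ⟨_, rfl⟩)
            (Submodule.mem_sup_right (e ⟨a, ha⟩).2)
      rw [hsupeq] at hE
      exact summand_of_compl_sup hE hABbot
    · -- π restricted to A is nonzero, hence an iso onto B; then IsCompl A C
      push_neg at hc
      obtain ⟨a₀, ha₀⟩ := hc
      set f : A →ₗ[R] B := π ∘ₗ A.subtype with hf
      have hkerf : LinearMap.ker f = ⊥ := by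
        rcases eq_bot_or_eq_top (LinearMap.ker f) with h | h
        · exact h
        · exfalso
          apply ha₀
          have : a₀ ∈ LinearMap.ker f := h ▸ Submodule.mem_top
          exact this
      have hrangef : LinearMap.range f = ⊤ := by
        rcases eq_bot_or_eq_top (LinearMap.range f) with h | h
        · exfalso
          apply ha₀
          have : f a₀ ∈ LinearMap.range f := ⟨a₀, rfl⟩
          rw [h] at this
          have : f a₀ = 0 := this
          exact this
        · exact h
      refine ⟨C, IsCompl.of_eq ?_ ?_⟩
      · rw [eq_bot_iff]
        rintro x ⟨hxA, hxC⟩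
        have : f ⟨x, hxA⟩ = 0 :=
          Submodule.projectionOnto_apply_of_mem_right hC hxC
        have : (⟨x, hxA⟩ : A) ∈ LinearMap.ker f := this
        rw [hkerf] at this
        exact (Submodule.mem_bot R).mpr (congrArg Subtype.val this)
      · rw [eq_top_iff]
        intro x _
        have : π x ∈ LinearMap.range f := hrangef ▸ Submodule.mem_top
        obtain ⟨a, ha⟩ := this
        have hxa : x - (a : M) ∈ C := by
          have : π (x - (a : M)) = 0 := by
            rw [map_sub]
            rw [show π (a : M) = f a from rfl, ha, sub_self]
          rwa [← Submodule.ker_projectionOnto (p := B) hC, LinearMap.mem_ker]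
        have : x = (a : M) + (x - (a : M)) := by abel
        rw [this]
        exact Submodule.add_mem _ (Submodule.mem_sup_left a.2) (Submodule.mem_sup_right hxa)
end

section
/- Let A be a class of right R-modules closed under isomorphisms and direct summands. Then every module in A is injective if and only if every right R-module is an A-C3 module. -/
universe u v

section AC3Aux

lemma retr_of_inj {R : Type u} [Ring R] {M : Type v} [AddCommGroup M] [Module R M]
    (X : Submodule R M) (h : Module.Injective R X) :
    ∃ s : M →ₗ[R] X, ∀ x : X, s (x : M) = x := by
  obtain ⟨s, hs⟩ := h.out X.subtype X.injective_subtype LinearMap.id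
  exact ⟨s, fun x => hs x⟩

lemma forward_C3 {R : Type u} [Ring R]
    (A : (N : Type v) → [AddCommGroup N] → [Module R N] → Prop)
    (hiso : ClosedUnderIso R A)
    (hinj : ∀ (N : Type v) [AddCommGroup N] [Module R N], A N → Module.Injective R N)
    (M : Type v) [AddCommGroup M] [Module R M] : IsAC3 R A M := by
  intro X Y hAX hAY hX hY hXY
  obtain ⟨Y', hY'⟩ := hY
  set π : M →ₗ[R] Y' := Submodule.projectionOnto Y' Y hY'.symm with hπ
  set πM : M →ₗ[R] M := Y'.subtype ∘ₗ π with hπM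
  have hπM_Y : ∀ y ∈ Y, πM y = 0 := by
    intro y hy
    simp [hπM, hπ, Submodule.projectionOnto_apply_of_mem_right hY'.symm hy]
  have hπM_Y' : ∀ y ∈ Y', πM y = y := by
    intro y hy
    have := Submodule.linearProjOfIsCompl_apply_left hY'.symm ⟨y, hy⟩
    simp [hπM, hπ, this]
  have hmemY' : ∀ m : M, πM m ∈ Y' := fun m => (π m).2
  have hsub : ∀ m : M, m - πM m ∈ Y := by
    intro m
    have hm : m ∈ Y ⊔ Y' := by rw [hY'.sup_eq_top]; trivial
    obtain ⟨y, hy, y', hy', hyy⟩ := Submodule.mem_sup.1 hm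
    have : πM m = y' := by
      rw [← hyy, map_add, hπM_Y y hy, hπM_Y' y' hy', zero_add]
    rw [this, ← hyy]
    simpa using hy
  set ψ : X →ₗ[R] M := πM ∘ₗ X.subtype with hψ
  have hψinj : Function.Injective ψ := by
    intro x₁ x₂ hx
    have h0 : ψ (x₁ - x₂) = 0 := by rw [map_sub, hx, sub_self]
    have hmem : ((x₁ - x₂ : X) : M) ∈ Y := by
      have := hsub ((x₁ - x₂ : X) : M)
      simpa [hψ, h0 ▸ (rfl : ψ (x₁ - x₂) = ψ (x₁ - x₂))] using
        (by
          have h2 := hsub ((x₁ - x₂ : X) : M)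
          have h3 : πM ((x₁ - x₂ : X) : M) = 0 := h0
          rwa [h3, sub_zero] at h2)
    have : ((x₁ - x₂ : X) : M) ∈ X ⊓ Y := ⟨(x₁ - x₂ : X).2, hmem⟩
    rw [hXY, Submodule.mem_bot] at this
    have : (x₁ - x₂ : X) = 0 := Subtype.ext this
    exact sub_eq_zero.1 this
  set X' : Submodule R M := LinearMap.range ψ with hX'
  have hX'Y' : X' ≤ Y' := by
    rintro _ ⟨x, rfl⟩
    exact hmemY' _
  have hAX' : A X' := hiso _ _ (LinearEquiv.ofInjective ψ hψinj) hAX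
  obtain ⟨s, hs⟩ := retr_of_inj X' (hinj _ hAX')
  set Z : Submodule R M := LinearMap.ker s ⊓ Y' with hZ
  -- X ≤ X' ⊔ Y
  have haux1 : X ≤ X' ⊔ Y := by
    intro x hx
    refine Submodule.mem_sup.2 ⟨πM x, ⟨⟨x, hx⟩, rfl⟩, x - πM x, hsub x, by abel⟩
  -- X' ≤ X ⊔ Y
  have haux2 : X' ≤ X ⊔ Y := by
    rintro _ ⟨x, rfl⟩
    have : ψ x = (x : M) - ((x : M) - πM (x : M)) := by simp [hψ]
    rw [this]
    exact sub_mem (Submodule.mem_sup_left x.2) (Submodule.mem_sup_right (hsub _))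
  refine ⟨Z, ?_, ?_⟩
  · rw [disjoint_iff, eq_bot_iff]
    rintro z ⟨hz1, hz2⟩
    obtain ⟨hzker, hzY'⟩ := hz2
    have hz1' : z ∈ X' ⊔ Y := sup_le haux1 le_sup_right hz1
    obtain ⟨x', hx', y, hy, hxy⟩ := Submodule.mem_sup.1 hz1'
    have hzx : z = x' := by
      have h1 : πM z = z := hπM_Y' z hzY'
      have h2 : πM z = x' := by
        rw [← hxy, map_add, hπM_Y' x' (hX'Y' hx'), hπM_Y y hy, add_zero]
      rw [← h1, h2]
    have hzX' : z ∈ X' := hzx ▸ hx'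
    have : s z = ⟨z, hzX'⟩ := hs ⟨z, hzX'⟩
    have hzker' : s z = 0 := hzker
    rw [hzker'] at this
    have : z = 0 := congrArg Subtype.val this.symm
    simp [this]
  · rw [codisjoint_iff, eq_top_iff]
    rintro m -
    have hm : m ∈ Y ⊔ Y' := by rw [hY'.sup_eq_top]; trivial
    obtain ⟨y, hy, y', hy', hyy⟩ := Submodule.mem_sup.1 hm
    have h1 : ((s y' : M)) ∈ X ⊔ Y := haux2 (s y').2
    have h2 : y' - (s y' : M) ∈ Z := by
      constructor
      · show y' - (s y' : M) ∈ LinearMap.ker s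
        rw [LinearMap.mem_ker, map_sub, hs (s y'), sub_self]
      · exact sub_mem hy' (hX'Y' (s y').2)
    have : m = (y + (s y' : M)) + (y' - (s y' : M)) := by rw [← hyy]; abel
    rw [this]
    exact add_mem (Submodule.mem_sup_left (add_mem (Submodule.mem_sup_right hy) h1))
      (Submodule.mem_sup_right h2)

lemma summand_of_prod_top {R : Type u} [Ring R] {M : Type v} [AddCommGroup M] [Module R M]
    {K : Type v} [AddCommGroup K] [Module R K]
    (S : Submodule R M) (h : IsSummand (S.prod (⊤ : Submodule R K))) :
    IsSummand S := by
  obtain ⟨C, hC⟩ := h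
  refine ⟨C.map (LinearMap.fst R M K), ?_, ?_⟩
  · rw [disjoint_iff]
    ext m
    simp only [Submodule.mem_inf, Submodule.mem_bot, Submodule.mem_map]
    constructor
    · rintro ⟨hmS, ⟨c, hcC, rfl⟩⟩
      have hcm : c ∈ S.prod (⊤ : Submodule R K) ⊓ C := ⟨⟨hmS, trivial⟩, hcC⟩
      rw [disjoint_iff.1 hC.disjoint] at hcm
      rw [Submodule.mem_bot] at hcm
      simp [hcm]
    · rintro rfl
      exact ⟨S.zero_mem, 0, C.zero_mem, map_zero _⟩
  · rw [codisjoint_iff]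
    ext m
    simp only [Submodule.mem_top, iff_true]
    have hm : ((m, 0) : M × K) ∈ S.prod (⊤ : Submodule R K) ⊔ C := by
      rw [hC.sup_eq_top]; trivial
    obtain ⟨p, hp, c, hc, hpc⟩ := Submodule.mem_sup.1 hm
    refine Submodule.mem_sup.2 ⟨p.1, hp.1, c.1, Submodule.mem_map.2 ⟨c, hc, rfl⟩, ?_⟩
    exact congrArg Prod.fst hpc

lemma backward_inj {R : Type u} [Ring R]
    (A : (N : Type v) → [AddCommGroup N] → [Module R N] → Prop)
    (hiso : ClosedUnderIso R A)
    (hC3 : ∀ (M : Type v) [AddCommGroup M] [Module R M], IsAC3 R A M)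
    (K : Type v) [AddCommGroup K] [Module R K] (hK : A K) : Module.Injective R K := by
  constructor
  intro X N _ _ _ _ f hf g
  set φ : X →ₗ[R] N × K := f.prod (-g) with hφ
  set W : Submodule R (N × K) := LinearMap.range φ with hW
  set β : K →ₗ[R] (N × K) ⧸ W := W.mkQ ∘ₗ LinearMap.inr R N K with hβ
  have hβinj : Function.Injective β := by
    intro k₁ k₂ hk
    have h0 : β (k₁ - k₂) = 0 := by rw [map_sub, hk, sub_self]
    have hmem : ((0, k₁ - k₂) : N × K) ∈ W := by
      have : W.mkQ (0, k₁ - k₂) = 0 := h0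
      rwa [Submodule.mkQ_apply, Submodule.Quotient.mk_eq_zero] at this
    obtain ⟨x, hx⟩ := hmem
    have h1 : f x = 0 := congrArg Prod.fst hx
    have hx0 : x = 0 := hf (by rw [h1, map_zero])
    have h2 : -g x = k₁ - k₂ := congrArg Prod.snd hx
    rw [hx0, map_zero, neg_zero] at h2
    exact sub_eq_zero.1 h2.symm
  set Q := (N × K) ⧸ W with hQ
  set γ : K →ₗ[R] Q × K := β.prod LinearMap.id with hγ
  have hγinj : Function.Injective γ := fun k₁ k₂ h => congrArg Prod.snd h
  set X₀ : Submodule R (Q × K) := LinearMap.range (LinearMap.inr R Q K) with hX₀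
  set Y₀ : Submodule R (Q × K) := LinearMap.range γ with hY₀
  have hAX₀ : A X₀ := hiso _ _ (LinearEquiv.ofInjective _ LinearMap.inr_injective) hK
  have hAY₀ : A Y₀ := hiso _ _ (LinearEquiv.ofInjective γ hγinj) hK
  have hSX₀ : IsSummand X₀ :=
    ⟨LinearMap.range (LinearMap.inl R Q K), LinearMap.isCompl_range_inl_inr.symm⟩
  have hSY₀ : IsSummand Y₀ := by
    refine ⟨LinearMap.range (LinearMap.inl R Q K), ?_, ?_⟩
    · rw [disjoint_iff, eq_bot_iff]
      rintro z ⟨⟨k, rfl⟩, ⟨q, hq⟩⟩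
      have : k = 0 := by
        have := congrArg Prod.snd hq
        simpa [hγ] using this.symm
      simp [this, hγ]
    · rw [codisjoint_iff, eq_top_iff]
      rintro ⟨q, k⟩ -
      have : (q, k) = γ k + (LinearMap.inl R Q K) (q - β k) := by
        simp [hγ]
      rw [this]
      exact add_mem (Submodule.mem_sup_left ⟨k, rfl⟩)
        (Submodule.mem_sup_right ⟨q - β k, rfl⟩)
  have hinf : X₀ ⊓ Y₀ = ⊥ := by
    rw [eq_bot_iff]
    rintro z ⟨⟨k, rfl⟩, ⟨k', hk'⟩⟩
    have h1 : β k' = 0 := by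
      have := congrArg Prod.fst hk'
      simpa [hγ] using this
    have h2 : k' = k := congrArg Prod.snd hk'
    have : k' = 0 := hβinj (by rw [h1, map_zero])
    rw [this] at h2
    simp [← h2]
  have hsum := hC3 (Q × K) X₀ Y₀ hAX₀ hAY₀ hSX₀ hSY₀ hinf
  have hsup_eq : X₀ ⊔ Y₀ = (LinearMap.range β).prod (⊤ : Submodule R K) := by
    apply le_antisymm
    · apply sup_le
      · rintro _ ⟨k, rfl⟩
        exact ⟨Submodule.zero_mem _, trivial⟩
      · rintro _ ⟨k, rfl⟩
        exact ⟨⟨k, rfl⟩, trivial⟩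
    · rintro ⟨q, k⟩ ⟨⟨k', hk'⟩, -⟩
      have : (q, k) = γ k' + (LinearMap.inr R Q K) (k - k') := by
        simp [hγ, hk']
      rw [this]
      exact add_mem (Submodule.mem_sup_right ⟨k', rfl⟩)
        (Submodule.mem_sup_left ⟨k - k', rfl⟩)
  rw [hsup_eq] at hsum
  obtain ⟨C, hC⟩ := summand_of_prod_top _ hsum
  set r₀ : Q →ₗ[R] LinearMap.range β := Submodule.linearProjOfIsCompl _ C hC with hr₀
  set e : K ≃ₗ[R] LinearMap.range β := LinearEquiv.ofInjective β hβinj with he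
  refine ⟨(e.symm : LinearMap.range β →ₗ[R] K) ∘ₗ r₀ ∘ₗ W.mkQ ∘ₗ LinearMap.inl R N K, ?_⟩
  intro x
  have hmk : W.mkQ (f x, 0) = β (g x) := by
    rw [hβ]
    show W.mkQ (f x, 0) = W.mkQ (0, g x)
    rw [Submodule.mkQ_apply, Submodule.mkQ_apply, Submodule.Quotient.eq]
    exact ⟨x, by simp [hφ]⟩
  have hβmem : β (g x) ∈ LinearMap.range β := ⟨g x, rfl⟩
  have hr : r₀ (β (g x)) = ⟨β (g x), hβmem⟩ :=
    Submodule.linearProjOfIsCompl_apply_left hC ⟨β (g x), hβmem⟩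
  have heq : (⟨β (g x), hβmem⟩ : LinearMap.range β) = e (g x) := by
    apply Subtype.ext
    simp [he]
  simp only [LinearMap.comp_apply, LinearMap.inl_apply]
  rw [hmk, hr, heq, LinearEquiv.coe_coe, LinearEquiv.symm_apply_apply]

end AC3Aux

theorem all_A_injective_iff_all_AC3 {R : Type u} [Ring R]
    (A : (N : Type v) → [AddCommGroup N] → [Module R N] → Prop)
    (hiso : ClosedUnderIso R A) (hsum : ClosedUnderSummands R A) :
    (∀ (N : Type v) [AddCommGroup N] [Module R N], A N → Module.Injective R N) ↔
      (∀ (M : Type v) [AddCommGroup M] [Module R M], IsAC3 R A M) := by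
  constructor
  · intro hinj M _ _
    exact forward_C3 A hiso hinj M
  · intro hC3 K _ _ hK
    exact backward_inj A hiso hC3 K hK
end

section
/- Let A be a class of right R-modules with local endomorphism rings, closed under isomorphisms. If M and K are indecomposable right R-modules neither of which lies in A, then N = M ⊕ K has no nonzero direct summand belonging to A; in particular N is both an A-D3 module and an A-C3 module. -/
universe u v

/-- If `S` is nontrivial, `f : S → M` and `g : M → S` with `g ∘ f` bijective and `M`
indecomposable, then `S ≃ M`. -/
theorem aux_iso_of_split {R : Type u} [Ring R] {M S : Type v}
    [AddCommGroup M] [Module R M] [AddCommGroup S] [Module R S]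
    (hS : Nontrivial S) (f : S →ₗ[R] M) (g : M →ₗ[R] S)
    (hu : Function.Bijective (g ∘ₗ f)) (hM : Indecomposable' R M) :
    Nonempty (S ≃ₗ[R] M) := by
  set w := LinearEquiv.ofBijective (g ∘ₗ f) hu with hw
  have hwapp : ∀ s : S, w s = g (f s) := fun s => rfl
  set p : M →ₗ[R] M := f ∘ₗ (w.symm : S ≃ₗ[R] S).toLinearMap ∘ₗ g with hp
  have hpf : ∀ s : S, p (f s) = f s := by
    intro s
    have : w.symm (g (f s)) = s := by
      rw [← hwapp]; exact w.symm_apply_apply s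
    simp [hp, this]
  have hpp : ∀ x : M, p (p x) = p x := by
    intro x
    have : p x = f (w.symm (g x)) := rfl
    rw [this, hpf]
  have hfinj : Function.Injective f := by
    intro a b hab
    exact hu.injective (by simp [hab])
  -- range p is a direct summand, and range p = range f
  have hcompl : IsCompl (LinearMap.range p) (LinearMap.ker p) := by
    constructor
    · rw [disjoint_iff]
      ext x
      simp only [Submodule.mem_inf, LinearMap.mem_range, LinearMap.mem_ker,
        Submodule.mem_bot]
      constructor
      · rintro ⟨⟨y, rfl⟩, h0⟩
        rw [← hpp y]; exact h0
      · rintro rfl; exact ⟨⟨0, map_zero p⟩, map_zero p⟩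
    · rw [codisjoint_iff]
      ext x
      simp only [Submodule.mem_top, iff_true]
      have : x = p x + (x - p x) := by abel
      rw [this]
      exact Submodule.add_mem_sup ⟨x, rfl⟩ (by simp [LinearMap.mem_ker, map_sub, hpp])
  have hrange : LinearMap.range p = LinearMap.range f := by
    apply le_antisymm
    · rintro _ ⟨y, rfl⟩; exact ⟨w.symm (g y), rfl⟩
    · rintro _ ⟨s, rfl⟩; exact ⟨f s, hpf s⟩
  have hsummand : IsSummand (LinearMap.range f) := ⟨LinearMap.ker p, hrange ▸ hcompl⟩
  rcases hM.2 _ hsummand with hbot | htop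
  · exfalso
    obtain ⟨s, hs⟩ := exists_ne (0 : S)
    have : f s = 0 := by
      have := hbot ▸ LinearMap.mem_range_self f s
      simpa using this
    exact hs (hfinj (by simp [this]))
  · have hfsurj : Function.Surjective f := LinearMap.range_eq_top.mp htop
    exact ⟨LinearEquiv.ofBijective f ⟨hfinj, hfsurj⟩⟩

theorem indecomposable_sum_no_A_summand {R : Type u} [Ring R]
    (A : (N : Type v) → [AddCommGroup N] → [Module R N] → Prop)
    (hiso : ClosedUnderIso R A)
    (hloc : ∀ (N : Type v) [AddCommGroup N] [Module R N], A N → IsLocalRing (Module.End R N))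
    (M K : Type v) [AddCommGroup M] [Module R M] [AddCommGroup K] [Module R K]
    (hM : Indecomposable' R M) (hK : Indecomposable' R K)
    (hMA : ¬ A M) (hKA : ¬ A K) :
    (∀ S : Submodule R (M × K), IsSummand S → S ≠ ⊥ → ¬ A S) ∧
      IsAD3 R A (M × K) ∧ IsAC3 R A (M × K) := by
  have main : ∀ S : Submodule R (M × K), IsSummand S → S ≠ ⊥ → ¬ A S := by
    rintro S ⟨T, hST⟩ hne hAS
    have hSnt : Nontrivial S := Submodule.nontrivial_iff_ne_bot.mpr hne
    have hlocS := hloc S hAS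
    set e : (M × K) →ₗ[R] S := S.linearProjOfIsCompl T hST with he
    set fM : S →ₗ[R] M := (LinearMap.fst R M K) ∘ₗ S.subtype with hfM
    set gM : M →ₗ[R] S := e ∘ₗ LinearMap.inl R M K with hgM
    set fK : S →ₗ[R] K := (LinearMap.snd R M K) ∘ₗ S.subtype with hfK
    set gK : K →ₗ[R] S := e ∘ₗ LinearMap.inr R M K with hgK
    have hsum : (gM ∘ₗ fM : Module.End R S) + (gK ∘ₗ fK) = 1 := by
      apply LinearMap.ext; intro x
      apply Subtype.ext
      have h1 : ((x : M × K).1, (0 : K)) + ((0 : M), (x : M × K).2) = (x : M × K) := by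
        simp
      have h2 : e ((x : M × K).1, (0 : K)) + e ((0 : M), (x : M × K).2) = x := by
        rw [← map_add, h1]
        exact Submodule.linearProjOfIsCompl_apply_left hST x
      simpa [hgM, hfM, hgK, hfK] using congrArg Subtype.val h2
    rcases IsLocalRing.isUnit_or_isUnit_of_add_one hsum with hu | hu
    · have hbij : Function.Bijective (gM ∘ₗ fM) := Module.End.isUnit_iff _ |>.mp hu
      obtain ⟨eqv⟩ := aux_iso_of_split hSnt fM gM hbij hM
      exact hMA (hiso S M eqv hAS)
    · have hbij : Function.Bijective (gK ∘ₗ fK) := Module.End.isUnit_iff _ |>.mp hu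
      obtain ⟨eqv⟩ := aux_iso_of_split hSnt fK gK hbij hK
      exact hKA (hiso S K eqv hAS)
  refine ⟨main, ?_, ?_⟩
  · -- A-D3
    rintro X Y ⟨X', hXX'⟩ ⟨Y', hYY'⟩ hAX hAY hsup
    have hX'bot : X' = ⊥ := by
      by_contra hne
      exact main X' ⟨X, hXX'.symm⟩ hne
        (hiso _ _ (Submodule.quotientEquivOfIsCompl X X' hXX') hAX)
    have hY'bot : Y' = ⊥ := by
      by_contra hne
      exact main Y' ⟨Y, hYY'.symm⟩ hne
        (hiso _ _ (Submodule.quotientEquivOfIsCompl Y Y' hYY') hAY)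
    have hXtop : X = ⊤ := by
      have := hXX'.codisjoint
      rw [hX'bot, codisjoint_bot] at this
      exact this
    have hYtop : Y = ⊤ := by
      have := hYY'.codisjoint
      rw [hY'bot, codisjoint_bot] at this
      exact this
    rw [hXtop, hYtop, inf_idem]
    exact ⟨⊥, isCompl_top_bot⟩
  · -- A-C3
    rintro X Y hAX hAY hXs hYs hdisj
    have hXbot : X = ⊥ := by
      by_contra hne
      exact main X hXs hne hAX
    have hYbot : Y = ⊥ := by
      by_contra hne
      exact main Y hYs hne hAY
    rw [hXbot, hYbot, sup_idem]
    exact ⟨⊤, isCompl_bot_top⟩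
end

section
/- If M₁ and M₂ are direct summands of a module M with M = M₁ + M₂ and both M/M₁ and M/M₂ projective, then M₁ ∩ M₂ is a direct summand of M. -/
universe u v

theorem inf_summand_of_projective_quotients {R : Type u} [Ring R]
    (M : Type v) [AddCommGroup M] [Module R M]
    (M₁ M₂ : Submodule R M)
    (h₁ : IsSummand M₁) (h₂ : IsSummand M₂)
    (hsup : M₁ ⊔ M₂ = ⊤)
    (hp₁ : Module.Projective R (M ⧸ M₁)) (hp₂ : Module.Projective R (M ⧸ M₂)) :
    IsSummand (M₁ ⊓ M₂) := by
  classical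
  set f : M →ₗ[R] (M ⧸ M₁) × (M ⧸ M₂) := (M₁.mkQ).prod (M₂.mkQ) with hf
  have hker : LinearMap.ker f = M₁ ⊓ M₂ := by
    ext x
    simp [hf, LinearMap.mem_ker, Prod.ext_iff, LinearMap.prod_apply,
      Submodule.Quotient.mk_eq_zero, Submodule.mem_inf]
  have hsurj : Function.Surjective f := by
    rintro ⟨a, b⟩
    obtain ⟨x, rfl⟩ := Submodule.mkQ_surjective M₁ a
    obtain ⟨y, rfl⟩ := Submodule.mkQ_surjective M₂ b
    have hxy : x - y ∈ M₁ ⊔ M₂ := hsup ▸ Submodule.mem_top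
    obtain ⟨u, hu, v, hv, huv⟩ := Submodule.mem_sup.mp hxy
    refine ⟨x - u, ?_⟩
    have h1 : (M₁.mkQ) (x - u) = (M₁.mkQ) x := by
      rw [← sub_eq_zero, ← map_sub, Submodule.mkQ_apply, Submodule.Quotient.mk_eq_zero]
      have he : x - u - x = -u := by abel
      rw [he]; exact Submodule.neg_mem _ hu
    have h2 : (M₂.mkQ) (x - u) = (M₂.mkQ) y := by
      rw [← sub_eq_zero, ← map_sub, Submodule.mkQ_apply, Submodule.Quotient.mk_eq_zero]
      have h' : x - y = u + v := huv.symm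
      have hxv : x - u - y = v := by rw [show x - u - y = (x - y) - u by abel, h']; abel
      rw [hxv]; exact hv
    simp only [hf, LinearMap.prod_apply, Function.prod, Prod.mk.injEq]
    exact ⟨h1, h2⟩
  obtain ⟨s, hs⟩ := Module.projective_lifting_property f LinearMap.id hsurj
  have hsec : ∀ z, f (s z) = z := fun z => congrFun (congrArg DFunLike.coe hs) z
  refine ⟨LinearMap.range s, ?_⟩
  rw [← hker]
  constructor
  · rw [disjoint_iff]
    ext x
    simp only [Submodule.mem_inf, Submodule.mem_bot, LinearMap.mem_ker, LinearMap.mem_range]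
    constructor
    · rintro ⟨hx0, z, rfl⟩
      rw [hsec] at hx0
      rw [hx0, map_zero]
    · rintro rfl
      exact ⟨map_zero f, 0, map_zero s⟩
  · rw [codisjoint_iff]
    rw [eq_top_iff]
    intro m _
    have : m = (m - s (f m)) + s (f m) := by abel
    rw [this]
    exact Submodule.add_mem_sup (by simp [LinearMap.mem_ker, hsec]) ⟨f m, rfl⟩
end

section
/- A regular ring R is a right V-ring if and only if every cyclic right R-module is simple-direct-injective. -/
universe u v

section AuxSDI
variable {R : Type u} [Ring R] {S : Type u} [AddCommGroup S] [Module R S]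

/-- Induced map on the image of `I` in `R ⧸ W`, when `f` vanishes on `W ≤ I`. -/
lemma aux_qmap (I : Submodule R R) (f : I →ₗ[R] S) (W : Submodule R R)
    (hWI : W ≤ I) (hWf : ∀ x (hx : x ∈ W), f ⟨x, hWI hx⟩ = 0) :
    ∃ Φ : (I.map W.mkQ) →ₗ[R] S, ∀ (x : R) (hx : x ∈ I),
      Φ ⟨W.mkQ x, Submodule.mem_map_of_mem hx⟩ = f ⟨x, hx⟩ := by
  set W' : Submodule R I := W.comap I.subtype with hW'def
  have hW'ker : W' ≤ LinearMap.ker f := by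
    intro j hj
    have hjW : (j : R) ∈ W := hj
    have h0 := hWf j hjW
    rw [LinearMap.mem_ker]
    have : (⟨(j : R), hWI hjW⟩ : I) = j := Subtype.ext rfl
    rwa [this] at h0
  set f' : (I ⧸ W') →ₗ[R] S := W'.liftQ f hW'ker with hf'def
  have hq0mem : ∀ j : I, W.mkQ (I.subtype j) ∈ I.map W.mkQ :=
    fun j => Submodule.mem_map_of_mem j.2
  set q0 : I →ₗ[R] (I.map W.mkQ) :=
    LinearMap.codRestrict _ (W.mkQ ∘ₗ I.subtype) hq0mem with hq0def
  have hq0ker : W' ≤ LinearMap.ker q0 := by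
    intro j hj
    rw [LinearMap.mem_ker]
    apply Subtype.ext
    show W.mkQ (I.subtype j) = 0
    rw [Submodule.mkQ_apply, Submodule.Quotient.mk_eq_zero]
    exact hj
  set q : (I ⧸ W') →ₗ[R] (I.map W.mkQ) := W'.liftQ q0 hq0ker with hqdef
  have hqmk : ∀ j : I, q (Submodule.Quotient.mk j) = ⟨W.mkQ (j : R), Submodule.mem_map_of_mem j.2⟩ := by
    intro j
    apply Subtype.ext
    rfl
  have hqbij : Function.Bijective q := by
    constructor
    · rw [← LinearMap.ker_eq_bot]
      rw [eq_bot_iff]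
      intro u hu
      obtain ⟨j, rfl⟩ := Submodule.Quotient.mk_surjective W' u
      rw [LinearMap.mem_ker] at hu
      have : W.mkQ (j : R) = 0 := congrArg Subtype.val (hqmk j ▸ hu)
      rw [Submodule.mkQ_apply, Submodule.Quotient.mk_eq_zero] at this
      simpa using (Submodule.Quotient.mk_eq_zero W').mpr this
    · rintro ⟨y, x, hx, rfl⟩
      exact ⟨Submodule.Quotient.mk ⟨x, hx⟩, Subtype.ext rfl⟩
  set e := LinearEquiv.ofBijective q hqbij with hedef
  refine ⟨f' ∘ₗ (e.symm : (I.map W.mkQ) →ₗ[R] (I ⧸ W')), ?_⟩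
  intro x hx
  have hsymm : e.symm ⟨W.mkQ x, Submodule.mem_map_of_mem hx⟩ = Submodule.Quotient.mk ⟨x, hx⟩ := by
    rw [LinearEquiv.symm_apply_eq]
    exact (hqmk ⟨x, hx⟩).symm
  show f' (e.symm ⟨W.mkQ x, Submodule.mem_map_of_mem hx⟩) = f ⟨x, hx⟩
  rw [hsymm]
  rfl

/-- If the image of `I` decomposes as `A ⊕ (image of K)` inside `R ⧸ W`, where `A` is a
direct summand with complement containing the image of `K`, then `f` extends to `R`. -/
lemma aux_ext (I : Submodule R R) (f : I →ₗ[R] S) (W K : Submodule R R)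
    (hKI : K ≤ I) (hKf : ∀ x (hx : x ∈ K), f ⟨x, hKI hx⟩ = 0) (hWK : W ≤ K)
    (A Y : Submodule R (R ⧸ W)) (hAY : IsCompl A Y)
    (hAI : A ≤ I.map W.mkQ) (hKY : K.map W.mkQ ≤ Y)
    (hIAK : I.map W.mkQ ≤ A ⊔ K.map W.mkQ) :
    ∃ g : R →ₗ[R] S, ∀ (x : R) (mem : x ∈ I), g x = f ⟨x, mem⟩ := by
  obtain ⟨Φ, hΦ⟩ := aux_qmap I f W (hWK.trans hKI) (fun x hx => hKf x (hWK hx))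
  refine ⟨(Φ ∘ₗ Submodule.inclusion hAI) ∘ₗ (A.linearProjOfIsCompl Y hAY) ∘ₗ W.mkQ, ?_⟩
  intro x mem
  have hx : W.mkQ x ∈ A ⊔ K.map W.mkQ := hIAK (Submodule.mem_map_of_mem mem)
  rw [Submodule.mem_sup] at hx
  obtain ⟨a, ha, kk, hkk, hsum⟩ := hx
  obtain ⟨k, hkK, rfl⟩ := hkk
  have hproj : A.linearProjOfIsCompl Y hAY (W.mkQ x) = ⟨a, ha⟩ := by
    rw [← hsum, map_add]
    have h1 : A.linearProjOfIsCompl Y hAY a = ⟨a, ha⟩ :=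
      Submodule.linearProjOfIsCompl_apply_left hAY ⟨a, ha⟩
    have h2 : A.linearProjOfIsCompl Y hAY (W.mkQ k) = 0 := by
      have hmem : W.mkQ k ∈ Y := hKY (Submodule.mem_map_of_mem hkK)
      exact Submodule.linearProjOfIsCompl_apply_right hAY ⟨W.mkQ k, hmem⟩
    rw [h1, h2, add_zero]
  show (Φ ∘ₗ Submodule.inclusion hAI) (A.linearProjOfIsCompl Y hAY (W.mkQ x)) = f ⟨x, mem⟩
  rw [hproj]
  have hxk : x - k ∈ I := sub_mem mem (hKI hkK)
  have haval : a = W.mkQ (x - k) := by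
    rw [map_sub, ← hsum]; abel
  have hmemmap : a ∈ I.map W.mkQ := hAI ha
  have : (Submodule.inclusion hAI ⟨a, ha⟩ : (I.map W.mkQ)) = ⟨W.mkQ (x - k), Submodule.mem_map_of_mem hxk⟩ :=
    Subtype.ext haval
  rw [LinearMap.comp_apply, this, hΦ (x - k) hxk]
  have : (⟨x - k, hxk⟩ : I) = ⟨x, mem⟩ - ⟨k, hKI hkK⟩ := rfl
  rw [this, map_sub, hKf k hkK, sub_zero]

lemma aux_forward {M : Type u} [AddCommGroup M] [Module R M] (A : Submodule R M)
    (hinj : Module.Injective R A) : IsSummand A := by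
  obtain ⟨π, hπ⟩ := hinj.out A.subtype Subtype.val_injective LinearMap.id
  refine ⟨LinearMap.ker π, ?_⟩
  constructor
  · rw [Submodule.disjoint_def]
    intro x hxA hxk
    rw [LinearMap.mem_ker] at hxk
    have := hπ ⟨x, hxA⟩
    rw [LinearMap.id_apply] at this
    have hx0 : (⟨x, hxA⟩ : A) = 0 := by
      rw [← this]; exact hxk
    simpa using congrArg Subtype.val hx0
  · rw [codisjoint_iff, eq_top_iff]
    intro y _
    have h1 : (π y : M) ∈ A := (π y).2
    have h2 : y - (π y : M) ∈ LinearMap.ker π := by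
      rw [LinearMap.mem_ker, map_sub]
      have : π ((π y : M)) = π y := hπ (π y)
      rw [this, sub_self]
    have : y = (π y : M) + (y - (π y : M)) := by abel
    rw [this]
    exact Submodule.add_mem_sup h1 h2

lemma aux_span (hS : IsSimpleModule R S) {s : S} (hs : s ≠ 0) (t : S) : ∃ r : R, r • s = t := by
  haveI := hS
  have h1 : Submodule.span R {s} = ⊤ := by
    rcases eq_bot_or_eq_top (Submodule.span R {s}) with h | h
    · exact absurd (Submodule.span_singleton_eq_bot.mp h) hs
    · exact h
  exact Submodule.mem_span_singleton.mp (h1.symm ▸ Submodule.mem_top)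

lemma aux_cyclic (W : Submodule R R) : ∃ m : R ⧸ W, Submodule.span R {m} = ⊤ := by
  refine ⟨W.mkQ 1, eq_top_iff.mpr fun y _ => ?_⟩
  obtain ⟨r, rfl⟩ := Submodule.Quotient.mk_surjective W y
  refine Submodule.mem_span_singleton.mpr ⟨r, ?_⟩
  rw [← map_smul, smul_eq_mul, mul_one]
  rfl

lemma aux_baer (hreg : ∀ a : R, ∃ x : R, a * x * a = a)
    (hSDI : ∀ (M : Type u) [AddCommGroup M] [Module R M],
        (∃ m : M, Submodule.span R {m} = ⊤) →
        ∀ A B : Submodule R M, IsSimpleModule R A → IsSimpleModule R B →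
          Nonempty (A ≃ₗ[R] B) → IsSummand B → IsSummand A)
    (hS : IsSimpleModule R S) : Module.Baer R S := by
  intro I f
  by_cases hf0 : ∀ x : I, f x = 0
  · exact ⟨0, fun x mem => by rw [hf0 ⟨x, mem⟩]; rfl⟩
  push_neg at hf0
  obtain ⟨⟨a, haI⟩, hfa⟩ := hf0
  obtain ⟨x, hx⟩ := hreg a
  set ε := x * a with hεdef
  have hεε : ε * ε = ε := by
    show (x * a) * (x * a) = x * a
    rw [mul_assoc x a (x*a), ← mul_assoc a x a, hx]
  have haε : a * ε = a := by rw [hεdef, ← mul_assoc, hx]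
  have hεI : ε ∈ I := by
    have := I.smul_mem x haI
    rwa [smul_eq_mul] at this
  set K : Submodule R R := (LinearMap.ker f).map I.subtype with hKdef
  have hKI : K ≤ I := by
    rintro k ⟨j, hj, rfl⟩
    exact j.2
  have hmemK : ∀ z (hz : z ∈ I), (z ∈ K ↔ f ⟨z, hz⟩ = 0) := by
    intro z hz
    constructor
    · rintro ⟨j, hj, rfl⟩
      exact (congrArg f (Subtype.ext rfl)).trans (LinearMap.mem_ker.mp hj)
    · intro h0
      exact ⟨⟨z, hz⟩, h0, rfl⟩
  have hKf : ∀ z (hz : z ∈ K), f ⟨z, hKI hz⟩ = 0 := fun z hz => (hmemK z (hKI hz)).mp hz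
  have haK : a ∉ K := fun h => hfa ((hmemK a haI).mp h)
  set s₀ : S := f ⟨ε, hεI⟩ with hs₀def
  set ρ : R →ₗ[R] S := LinearMap.toSpanSingleton R S s₀ with hρdef
  have hρ : ∀ r : R, ρ r = f ⟨r * ε, I.smul_mem r hεI⟩ := by
    intro r
    have h1 : (r • (⟨ε, hεI⟩ : I)) = ⟨r * ε, I.smul_mem r hεI⟩ := Subtype.ext (by
      show r • ε = r * ε
      rw [smul_eq_mul])
    calc ρ r = r • f ⟨ε, hεI⟩ := LinearMap.toSpanSingleton_apply R S s₀ r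
    _ = f (r • ⟨ε, hεI⟩) := (map_smul f r _).symm
    _ = _ := by rw [h1]
  have hρa : ρ a = f ⟨a, haI⟩ := by
    rw [hρ a]
    congr 1
    exact Subtype.ext haε
  have hs₀ : s₀ ≠ 0 := by
    intro h0
    apply hfa
    rw [← hρa, hρdef, LinearMap.toSpanSingleton_apply, h0, smul_zero]
  -- membership in span singletons
  have hspanε : ∀ r : R, r * ε ∈ Submodule.span R {ε} := fun r =>
    Submodule.mem_span_singleton.mpr ⟨r, by rw [smul_eq_mul]⟩
  have hspanε' : ∀ r : R, r * (1 - ε) ∈ Submodule.span R ({1 - ε} : Set R) := fun r =>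
    Submodule.mem_span_singleton.mpr ⟨r, by rw [smul_eq_mul]⟩
  by_cases hbad : ∀ k ∈ K, k * ε ∈ K
  · -- CASE: K·ε ⊆ K.  Work in M = R ⧸ K.
    have hKρ : K ≤ LinearMap.ker ρ := by
      intro k hk
      rw [LinearMap.mem_ker, hρ k]
      exact (hmemK _ (I.smul_mem k hεI)).mp (by
        have := hbad k hk
        rwa [← smul_eq_mul] at this)
    set ρb : (R ⧸ K) →ₗ[R] S := K.liftQ ρ hKρ with hρbdef
    have hρbmk : ∀ r : R, ρb (K.mkQ r) = ρ r := fun r => rfl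
    set A : Submodule R (R ⧸ K) := Submodule.map K.mkQ I with hAdef
    set B : Submodule R (R ⧸ K) := (Submodule.span R {ε}).map K.mkQ with hBdef
    set B' : Submodule R (R ⧸ K) := (Submodule.span R ({1 - ε} : Set R)).map K.mkQ with hB'def
    obtain ⟨Φ, hΦ⟩ := aux_qmap I f K hKI hKf
    have hΦbij : Function.Bijective Φ := by
      constructor
      · rw [← LinearMap.ker_eq_bot, eq_bot_iff]
        intro u hu
        obtain ⟨z, hzI, hz⟩ := u.2
        have hu' : u = ⟨K.mkQ z, Submodule.mem_map_of_mem hzI⟩ := Subtype.ext hz.symm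
        rw [LinearMap.mem_ker, hu', hΦ z hzI] at hu
        have hzK : z ∈ K := (hmemK z hzI).mpr hu
        rw [Submodule.mem_bot, hu']
        apply Subtype.ext
        show K.mkQ z = 0
        rw [Submodule.mkQ_apply, Submodule.Quotient.mk_eq_zero]
        exact hzK
      · intro s
        obtain ⟨r, hr⟩ := aux_span hS hfa s
        refine ⟨⟨K.mkQ (r • a), Submodule.mem_map_of_mem (I.smul_mem r haI)⟩, ?_⟩
        have h1 : r • a ∈ I := I.smul_mem r haI
        rw [hΦ (r • a) h1]
        have h2 : (⟨r • a, h1⟩ : I) = r • ⟨a, haI⟩ := Subtype.ext rfl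
        rw [h2, map_smul, hr]
    have eA : A ≃ₗ[R] S := LinearEquiv.ofBijective Φ hΦbij
    set ΦB : B →ₗ[R] S := ρb ∘ₗ B.subtype with hΦBdef
    have hΦBbij : Function.Bijective ΦB := by
      constructor
      · rw [← LinearMap.ker_eq_bot, eq_bot_iff]
        intro u hu
        obtain ⟨z, hzsp, hz⟩ := u.2
        obtain ⟨r, hr⟩ := Submodule.mem_span_singleton.mp hzsp
        rw [smul_eq_mul] at hr
        rw [LinearMap.mem_ker] at hu
        have hval : ρ z = 0 := by
          have : ΦB u = ρb (K.mkQ z) := by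
            show ρb (u : R ⧸ K) = _
            rw [hz]
          rwa [this, hρbmk] at hu
        have hzε : z * ε = z := by rw [← hr, mul_assoc, hεε]
        have hzI : z ∈ I := by rw [← hr]; exact I.smul_mem r hεI
        have : f ⟨z, hzI⟩ = 0 := by
          rw [hρ z] at hval
          rw [← hval]
          congr 1
          exact Subtype.ext hzε.symm
        have hzK : z ∈ K := (hmemK z hzI).mpr this
        rw [Submodule.mem_bot]
        apply Subtype.ext
        show (u : R ⧸ K) = 0
        rw [← hz, Submodule.mkQ_apply, Submodule.Quotient.mk_eq_zero]
        exact hzK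
      · intro s
        obtain ⟨r, hr⟩ := aux_span hS hs₀ s
        refine ⟨⟨K.mkQ (r * ε), Submodule.mem_map_of_mem (hspanε r)⟩, ?_⟩
        show ρb (K.mkQ (r * ε)) = s
        rw [hρbmk, hρdef, LinearMap.toSpanSingleton_apply, ← hr]
        have hεs₀ : ε • s₀ = s₀ := by
          have h1 : ε • s₀ = f ⟨ε * ε, I.smul_mem ε hεI⟩ := by
            rw [← LinearMap.toSpanSingleton_apply R S s₀ ε]; exact hρ ε
          rw [h1, hs₀def]
          exact congrArg f (Subtype.ext hεε)
        rw [← smul_smul, hεs₀]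
    have eB : B ≃ₗ[R] S := LinearEquiv.ofBijective ΦB hΦBbij
    haveI := hS
    have hAsimple : IsSimpleModule R A := IsSimpleModule.congr eA
    have hBsimple : IsSimpleModule R B := IsSimpleModule.congr eB
    have hBB' : IsCompl B B' := by
      constructor
      · rw [Submodule.disjoint_def]
        intro u hu hu'
        obtain ⟨z, hzsp, hz⟩ := hu
        obtain ⟨w, hwsp, hw⟩ := hu'
        obtain ⟨r, hr⟩ := Submodule.mem_span_singleton.mp hzsp
        obtain ⟨t, ht⟩ := Submodule.mem_span_singleton.mp hwsp
        rw [smul_eq_mul] at hr ht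
        have hzw : K.mkQ z = K.mkQ w := by rw [hz, hw]
        have hsub : z - w ∈ K := by
          rwa [Submodule.mkQ_apply, Submodule.mkQ_apply, Submodule.Quotient.eq] at hzw
        have hzK : z ∈ K := by
          have h1 : (z - w) * ε ∈ K := hbad _ hsub
          have h2 : (z - w) * ε = z := by
            rw [sub_mul, ← hr, ← ht, mul_assoc, hεε, mul_assoc]
            have : (1 - ε) * ε = 0 := by rw [sub_mul, one_mul, hεε, sub_self]
            rw [this, mul_zero, sub_zero]
          rwa [h2] at h1
        rw [← hz, Submodule.mkQ_apply, Submodule.Quotient.mk_eq_zero]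
        exact hzK
      · rw [codisjoint_iff, hBdef, hB'def, ← Submodule.map_sup]
        have hsup : Submodule.span R {ε} ⊔ Submodule.span R ({1 - ε} : Set R) = ⊤ := by
          rw [eq_top_iff]
          intro r _
          have : r = r * ε + r * (1 - ε) := by noncomm_ring
          rw [this]
          exact Submodule.add_mem_sup (hspanε r) (hspanε' r)
        rw [hsup, Submodule.map_top, Submodule.range_mkQ]
    have hsummand : IsSummand A :=
      hSDI (R ⧸ K) (aux_cyclic K) A B hAsimple hBsimple ⟨eA.trans eB.symm⟩ ⟨B', hBB'⟩
    obtain ⟨Y, hAY⟩ := hsummand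
    have hKY : Submodule.map K.mkQ K ≤ Y := by
      rintro u ⟨k, hk, rfl⟩
      have : K.mkQ k = 0 := by
        rw [Submodule.mkQ_apply, Submodule.Quotient.mk_eq_zero]; exact hk
      rw [this]
      exact Y.zero_mem
    exact aux_ext I f K K hKI hKf le_rfl A Y hAY le_rfl hKY le_sup_left
  · push_neg at hbad
    obtain ⟨k₀, hk₀K, hk₀ε⟩ := hbad
    have hmul : ∀ r : R, r * ε ∈ I := fun r => by
      have := I.smul_mem r hεI; rwa [smul_eq_mul] at this
    have hρk₀ : ρ k₀ ≠ 0 := by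
      rw [hρ k₀]
      intro h0
      exact hk₀ε ((hmemK _ (hmul k₀)).mpr h0)
    set m : Submodule R R := (K ⊓ Submodule.span R {ε}) ⊔ Submodule.span R ({1 - ε} : Set R)
      with hmdef
    have hmker : m ≤ LinearMap.ker ρ := by
      rw [hmdef]
      apply sup_le
      · rintro u ⟨huK, huε⟩
        obtain ⟨c, hc⟩ := Submodule.mem_span_singleton.mp huε
        rw [smul_eq_mul] at hc
        rw [LinearMap.mem_ker, hρ u]
        have huu : u * ε = u := by rw [← hc, mul_assoc, hεε]
        have h9 : (⟨u * ε, I.smul_mem u hεI⟩ : I) = ⟨u, hKI huK⟩ := Subtype.ext huu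
        rw [h9]
        exact hKf u huK
      · rintro v hv
        obtain ⟨t, ht⟩ := Submodule.mem_span_singleton.mp hv
        rw [smul_eq_mul] at ht
        rw [LinearMap.mem_ker, hρ v]
        have hv0 : v * ε = 0 := by
          rw [← ht, mul_assoc, sub_mul, one_mul, hεε, sub_self, mul_zero]
        have h9 : (⟨v * ε, I.smul_mem v hεI⟩ : I) = 0 := Subtype.ext hv0
        rw [h9, map_zero]
    have hker_m : ∀ k ∈ K, ρ k = 0 → k ∈ m := by
      intro k hk h0
      rw [hρ k] at h0
      have h1 : k * ε ∈ K := (hmemK _ (hmul k)).mpr h0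
      have h2 : k * ε ∈ K ⊓ Submodule.span R {ε} := ⟨h1, hspanε k⟩
      have h3 : k = k * ε + k * (1 - ε) := by noncomm_ring
      rw [hmdef, h3]
      exact Submodule.add_mem_sup h2 (hspanε' k)
    have htop : K ⊔ m = ⊤ := by
      rw [eq_top_iff]
      intro r _
      have hrε : ∀ r' : R, r' * ε ∈ K ⊔ m := by
        intro r'
        obtain ⟨c, hc⟩ := aux_span hS hρk₀ (ρ r')
        have h0 : ρ (r' - c * k₀) = 0 := by
          rw [map_sub, ← hc]
          have h9 : ρ (c * k₀) = c • ρ k₀ := by rw [← smul_eq_mul, map_smul]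
          rw [h9, sub_self]
        have h1 : (r' - c * k₀) * ε ∈ K := by
          rw [hρ _] at h0
          exact (hmemK _ (hmul _)).mpr h0
        have h2 : c * k₀ ∈ K := by
          have := K.smul_mem c hk₀K; rwa [smul_eq_mul] at this
        have h3 : (c * k₀) * (1 - ε) ∈ m := Submodule.mem_sup_right (hspanε' (c * k₀))
        have h4 : r' * ε = ((r' - c * k₀) * ε + c * k₀) - (c * k₀) * (1 - ε) := by noncomm_ring
        rw [h4]
        exact sub_mem (add_mem (Submodule.mem_sup_left h1) (Submodule.mem_sup_left h2))
          (Submodule.mem_sup_right h3)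
      have h5 : r = r * ε + r * (1 - ε) := by noncomm_ring
      rw [h5]
      exact add_mem (hrε r)
        (Submodule.mem_sup_right (Submodule.mem_sup_right (hspanε' r)))
    set W : Submodule R R := K ⊓ m with hWdef
    have hWK : W ≤ K := inf_le_left
    have hWm : W ≤ m := inf_le_right
    set Kb : Submodule R (R ⧸ W) := Submodule.map W.mkQ K with hKbdef
    set mb : Submodule R (R ⧸ W) := Submodule.map W.mkQ m with hmbdef
    have hcompl : IsCompl Kb mb := by
      constructor
      · rw [Submodule.disjoint_def]
        intro u hu hu'
        obtain ⟨k, hk, hkval⟩ := hu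
        obtain ⟨y, hy, hyval⟩ := hu'
        have hky : k - y ∈ W := by
          rw [← Submodule.Quotient.eq, ← Submodule.mkQ_apply, ← Submodule.mkQ_apply,
            hkval, hyval]
        have hkm : k ∈ m := by
          have h5 : k = (k - y) + y := by abel
          rw [h5]; exact add_mem (hWm hky) hy
        rw [← hkval, Submodule.mkQ_apply, Submodule.Quotient.mk_eq_zero]
        exact ⟨hk, hkm⟩
      · rw [codisjoint_iff, hKbdef, hmbdef, ← Submodule.map_sup, htop, Submodule.map_top,
          Submodule.range_mkQ]
    set ρb : (R ⧸ W) →ₗ[R] S := W.liftQ ρ (le_trans hWm hmker) with hρbdef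
    have hρbmk : ∀ r : R, ρb (W.mkQ r) = ρ r := fun r => rfl
    set ΦB : Kb →ₗ[R] S := ρb ∘ₗ Kb.subtype with hΦBdef
    have hΦBbij : Function.Bijective ΦB := by
      constructor
      · rw [← LinearMap.ker_eq_bot, eq_bot_iff]
        intro u hu
        obtain ⟨k, hk, hkval⟩ := u.2
        rw [LinearMap.mem_ker] at hu
        have hval : ρ k = 0 := by
          have h9 : ΦB u = ρb (W.mkQ k) := by
            show ρb (u : R ⧸ W) = _; rw [hkval]
          rwa [h9, hρbmk] at hu
        have hkW : k ∈ W := ⟨hk, hker_m k hk hval⟩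
        rw [Submodule.mem_bot]
        apply Subtype.ext
        show (u : R ⧸ W) = 0
        rw [← hkval, Submodule.mkQ_apply, Submodule.Quotient.mk_eq_zero]
        exact hkW
      · intro s
        obtain ⟨c, hc⟩ := aux_span hS hρk₀ s
        have h2 : c * k₀ ∈ K := by
          have := K.smul_mem c hk₀K; rwa [smul_eq_mul] at this
        refine ⟨⟨W.mkQ (c * k₀), Submodule.mem_map_of_mem h2⟩, ?_⟩
        show ρb (W.mkQ (c * k₀)) = s
        rw [hρbmk, ← smul_eq_mul, map_smul, hc]
    have eB : Kb ≃ₗ[R] S := LinearEquiv.ofBijective ΦB hΦBbij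
    have haKm : a ∈ K ⊔ m := htop ▸ Submodule.mem_top
    rw [Submodule.mem_sup] at haKm
    obtain ⟨k₁, hk₁, z, hzm, hsum⟩ := haKm
    have hzI : z ∈ I := by
      have h9 : z = a - k₁ := by rw [← hsum]; abel
      rw [h9]; exact sub_mem haI (hKI hk₁)
    have hfz : f ⟨z, hzI⟩ ≠ 0 := by
      intro h0
      apply hfa
      have h9 : (⟨a, haI⟩ : I) = ⟨k₁, hKI hk₁⟩ + ⟨z, hzI⟩ := Subtype.ext hsum.symm
      rw [h9, map_add, hKf k₁ hk₁, h0, add_zero]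
    have hWIm : W ≤ I ⊓ m := le_inf (le_trans hWK hKI) hWm
    set A : Submodule R (R ⧸ W) := Submodule.map W.mkQ (I ⊓ m) with hAdef
    obtain ⟨ΦA, hΦA⟩ := aux_qmap (I ⊓ m) (f ∘ₗ Submodule.inclusion inf_le_left) W hWIm
      (fun w hw => by
        have h9 : (f ∘ₗ Submodule.inclusion inf_le_left) ⟨w, hWIm hw⟩ =
            f ⟨w, hKI (hWK hw)⟩ := congrArg f (Subtype.ext rfl)
        rw [h9]
        exact hKf w (hWK hw))
    have hΦAbij : Function.Bijective ΦA := by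
      constructor
      · rw [← LinearMap.ker_eq_bot, eq_bot_iff]
        intro u hu
        obtain ⟨w, hw, hwval⟩ := u.2
        have hu' : u = ⟨W.mkQ w, Submodule.mem_map_of_mem hw⟩ := Subtype.ext hwval.symm
        rw [LinearMap.mem_ker, hu', hΦA w hw] at hu
        have h9 : (f ∘ₗ Submodule.inclusion inf_le_left) (⟨w, hw⟩ : (I ⊓ m : Submodule R R)) =
            f ⟨w, hw.1⟩ := congrArg f (Subtype.ext rfl)
        rw [h9] at hu
        have hwK : w ∈ K := (hmemK w hw.1).mpr hu
        rw [Submodule.mem_bot, hu']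
        apply Subtype.ext
        show W.mkQ w = 0
        rw [Submodule.mkQ_apply, Submodule.Quotient.mk_eq_zero]
        exact ⟨hwK, hw.2⟩
      · intro s
        obtain ⟨c, hc⟩ := aux_span hS hfz s
        have hcz : c • z ∈ I ⊓ m := ⟨I.smul_mem c hzI, m.smul_mem c hzm⟩
        refine ⟨⟨W.mkQ (c • z), Submodule.mem_map_of_mem hcz⟩, ?_⟩
        rw [hΦA (c • z) hcz]
        have h9 : (f ∘ₗ Submodule.inclusion inf_le_left) (⟨c • z, hcz⟩ : (I ⊓ m : Submodule R R)) =
            f (c • ⟨z, hzI⟩) := congrArg f (Subtype.ext rfl)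
        rw [h9, map_smul, hc]
    have eA : A ≃ₗ[R] S := LinearEquiv.ofBijective ΦA hΦAbij
    haveI := hS
    have hAsimple : IsSimpleModule R A := IsSimpleModule.congr eA
    have hBsimple : IsSimpleModule R Kb := IsSimpleModule.congr eB
    have hAmb : A ≤ mb := Submodule.map_mono inf_le_right
    have hsummand : IsSummand A :=
      hSDI (R ⧸ W) (aux_cyclic W) A Kb hAsimple hBsimple ⟨eA.trans eB.symm⟩ ⟨mb, hcompl⟩
    obtain ⟨Y, hAY⟩ := hsummand
    set Y' : Submodule R (R ⧸ W) := Kb ⊔ (Y ⊓ mb) with hY'def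
    have hAY' : IsCompl A Y' := by
      constructor
      · rw [Submodule.disjoint_def]
        intro u huA huY'
        rw [hY'def, Submodule.mem_sup] at huY'
        obtain ⟨k, hk, w, hw, hsum3⟩ := huY'
        have hkmb : k ∈ mb := by
          have h9 : k = u - w := by rw [← hsum3]; abel
          rw [h9]
          exact sub_mem (hAmb huA) hw.2
        have hk0 : k = 0 := (Submodule.disjoint_def.mp hcompl.disjoint) k hk hkmb
        have huw : u = w := by rw [← hsum3, hk0, zero_add]
        exact (Submodule.disjoint_def.mp hAY.disjoint) u huA (huw ▸ hw.1)
      · have hmb_le : mb ≤ A ⊔ (Y ⊓ mb) := by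
          have h6 : (A ⊔ Y) ⊓ mb = A ⊔ (Y ⊓ mb) := sup_inf_assoc_of_le Y hAmb
          have h8 : A ⊔ Y = ⊤ := codisjoint_iff.mp hAY.codisjoint
          rw [← h6, h8, top_inf_eq]
        have h7 : (⊤ : Submodule R (R ⧸ W)) ≤ A ⊔ Y' := by
          calc (⊤ : Submodule R (R ⧸ W)) = Kb ⊔ mb := (codisjoint_iff.mp hcompl.codisjoint).symm
          _ ≤ Kb ⊔ (A ⊔ (Y ⊓ mb)) := sup_le_sup_left hmb_le Kb
          _ = A ⊔ (Kb ⊔ (Y ⊓ mb)) := sup_left_comm Kb A (Y ⊓ mb)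
        rw [codisjoint_iff]
        exact le_antisymm le_top h7
    apply aux_ext I f W K hKI hKf hWK A Y' hAY' (Submodule.map_mono inf_le_left) le_sup_left
    rintro u ⟨i, hi, rfl⟩
    have h9 : i ∈ K ⊔ m := htop ▸ Submodule.mem_top
    rw [Submodule.mem_sup] at h9
    obtain ⟨k, hk, y, hy, hsum2⟩ := h9
    have hyI : y ∈ I := by
      have h10 : y = i - k := by rw [← hsum2]; abel
      rw [h10]; exact sub_mem hi (hKI hk)
    rw [← hsum2, map_add]
    exact add_mem (Submodule.mem_sup_right (Submodule.mem_map_of_mem hk))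
      (Submodule.mem_sup_left (Submodule.mem_map_of_mem ⟨hyI, hy⟩))

end AuxSDI

theorem regular_Vring_iff_cyclic_SDI {R : Type u} [Ring R]
    (hreg : ∀ a : R, ∃ x : R, a * x * a = a) :
    (∀ (N : Type u) [AddCommGroup N] [Module R N], IsSimpleModule R N →
        Module.Injective R N) ↔
      (∀ (M : Type u) [AddCommGroup M] [Module R M],
        (∃ m : M, Submodule.span R {m} = ⊤) →
        ∀ A B : Submodule R M, IsSimpleModule R A → IsSimpleModule R B →
          Nonempty (A ≃ₗ[R] B) → IsSummand B → IsSummand A) := by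
  constructor
  · intro hV M _ _ _ A B hA _ _ _
    exact aux_forward A (hV _ hA)
  · intro hSDI N _ _ hN
    exact (aux_baer hreg hSDI hN).injective
end
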